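/- arXiv:1512.07478 — 5 statements merged into one kernel-verified Lean document; each statement's English description precedes it below -/
import Mathlib

section
/- Let X be a Baire space and Y a Valdivia compact, i.e., Y embeds into some [0,1]^T so that Y ∩ Σ is dense in Y, where Σ is the set of points of [0,1]^T with countable support. Let f : X × Y → ℝ be continuous in the second variable, and suppose there is a dense G_δ set B₁ ⊆ Y such that x ↦ f(x,b) is quasi-continuous for each b ∈ B₁. Then f has the Namioka property. -/
open Topology

/-- A map is quasi-continuous at `x₀` if every neighborhood of `x₀` contains a nonempty open
set mapped into any prescribed neighborhood of `f x₀`. -/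
def QuasiContinuousAt {X Y : Type*} [TopologicalSpace X] [TopologicalSpace Y]
    (f : X → Y) (x₀ : X) : Prop :=
  ∀ U ∈ 𝓝 x₀, ∀ V ∈ 𝓝 (f x₀), ∃ G : Set X, IsOpen G ∧ G.Nonempty ∧ G ⊆ U ∧ f '' G ⊆ V

/-- A map is quasi-continuous if it is quasi-continuous at every point. -/
def QuasiContinuous {X Y : Type*} [TopologicalSpace X] [TopologicalSpace Y]
    (f : X → Y) : Prop :=
  ∀ x : X, QuasiContinuousAt f x

/-- `f : X × Y → Z` has the Namioka property if there is a dense `Gδ` set `A ⊆ X` such that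
`f` is jointly continuous at every point of `A × Y`. -/
def NamiokaProperty {X Y Z : Type*} [TopologicalSpace X] [TopologicalSpace Y]
    [TopologicalSpace Z] (f : X × Y → Z) : Prop :=
  ∃ A : Set X, Dense A ∧ IsGδ A ∧ ∀ x ∈ A, ∀ y : Y, ContinuousAt f (x, y)

/-- `Y` is a Kempisty space if for every Baire space `X`, every `f : X × Y → ℝ`
quasi-continuous in the first variable and continuous in the second has the Namioka property. -/
def KempistySpace (Y : Type*) [TopologicalSpace Y] : Prop :=
  ∀ (X : Type*) (_ : TopologicalSpace X), BaireSpace X →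
    ∀ f : X × Y → ℝ,
      (∀ y : Y, QuasiContinuous fun x => f (x, y)) →
      (∀ x : X, Continuous fun y => f (x, y)) →
      NamiokaProperty f

open Set Filter


section BM
variable {X : Type*} [TopologicalSpace X]

/-- Validity of a (reversed) play against strategy `σ`. -/
def BMValid (σ : List (Set X) → Set X) : List (Set X) → Prop
  | [] => True
  | V :: l => BMValid σ l ∧ IsOpen V ∧ V.Nonempty ∧ V ⊆ σ l

theorem BM_lemma [BaireSpace X] (σ : List (Set X) → Set X)
    (hσ : ∀ l, BMValid σ l →
      IsOpen (σ l) ∧ (σ l).Nonempty ∧ ∀ V l', l = V :: l' → σ l ⊆ V) :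
    ∃ (x : X) (p : ℕ → List (Set X)), p 0 = [] ∧ (∀ n, BMValid σ (p n)) ∧
      (∀ n, ∃ V, p (n + 1) = V :: p n) ∧ (∀ n, x ∈ σ (p n)) := by
  classical
  set W : Set X := σ [] with hWdef
  have hWvalid : BMValid σ ([] : List (Set X)) := trivial
  obtain ⟨hWopen, hWne, -⟩ := hσ [] hWvalid
  -- admissible moves
  let Adm : List (Set X) → Set X → Prop := fun p V => IsOpen V ∧ V.Nonempty ∧ V ⊆ σ p
  -- valid extension
  have hext : ∀ p V, BMValid σ p → Adm p V → BMValid σ (V :: p) := by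
    intro p V hp hV; exact ⟨hp, hV.1, hV.2.1, hV.2.2⟩
  -- maximal disjoint families
  have hFam : ∀ p : List (Set X), ∃ 𝒱 : Set (Set X), BMValid σ p →
      (∀ V ∈ 𝒱, Adm p V) ∧
      (∀ V ∈ 𝒱, ∀ V' ∈ 𝒱, V ≠ V' → Disjoint (σ (V :: p)) (σ (V' :: p))) ∧
      (∀ O, Adm p O → ∃ V ∈ 𝒱, (O ∩ σ (V :: p)).Nonempty) := by
    intro p
    by_cases hv : BMValid σ p
    · set S : Set (Set (Set X)) := {𝒱 | (∀ V ∈ 𝒱, Adm p V) ∧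
        (∀ V ∈ 𝒱, ∀ V' ∈ 𝒱, V ≠ V' → Disjoint (σ (V :: p)) (σ (V' :: p)))} with hSdef
      obtain ⟨m, hm⟩ := zorn_subset S (by
        intro c hc hchain
        refine ⟨⋃₀ c, ⟨?_, ?_⟩, fun s hs => subset_sUnion_of_mem hs⟩
        · rintro V ⟨a, ha, hVa⟩
          exact (hc ha).1 V hVa
        · rintro V ⟨a, ha, hVa⟩ V' ⟨b, hb, hVb⟩ hne
          rcases hchain.total ha hb with hab | hba
          · exact (hc hb).2 V (hab hVa) V' hVb hne
          · exact (hc ha).2 V hVa V' (hba hVb) hne)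
      refine ⟨m, fun _ => ⟨hm.1.1, hm.1.2, ?_⟩⟩
      intro O hO
      by_contra hno
      have hOv : BMValid σ (O :: p) := hext p O hv hO
      obtain ⟨hOo, hOne, hOsub⟩ := hσ _ hOv
      have hOsubO : σ (O :: p) ⊆ O := hOsub O p rfl
      have hOnotm : O ∉ m := by
        intro hOm
        obtain ⟨x, hx⟩ := hOne
        exact hno ⟨O, hOm, x, hOsubO hx, hx⟩
      have hmem : m ∪ {O} ∈ S := by
        constructor
        · intro V hVm
          rcases hVm with hV | hV
          · exact hm.1.1 V hV
          · have hVO : V = O := hV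
            rw [hVO]; exact hO
        · intro V hVm V' hV'm hne
          rcases hVm with hV | hV
          · rcases hV'm with hV' | hV'
            · exact hm.1.2 V hV V' hV' hne
            · have hV'O : V' = O := hV'
              rw [hV'O, Set.disjoint_right]
              intro a ha ha'
              exact hno ⟨V, hV, a, hOsubO ha, ha'⟩
          · have hVO : V = O := hV
            rcases hV'm with hV' | hV'
            · rw [hVO, Set.disjoint_left]
              intro a ha ha'
              exact hno ⟨V', hV', a, hOsubO ha, ha'⟩
            · have hV'O : V' = O := hV'
              exact absurd (hVO.trans hV'O.symm) hne
      have := hm.2 hmem (subset_union_left)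
      exact hOnotm (this (by exact Set.mem_union_right _ rfl))
    · exact ⟨∅, fun h => absurd h hv⟩
  choose Fam hFamSpec using hFam
  -- levels
  let A : ℕ → Set (List (Set X)) := fun n =>
    Nat.rec {[]} (fun _ P => {l | ∃ p ∈ P, ∃ V ∈ Fam p, l = V :: p}) n
  have hA0 : A 0 = {[]} := rfl
  have hAs : ∀ n, A (n + 1) = {l | ∃ p ∈ A n, ∃ V ∈ Fam p, l = V :: p} := fun _ => rfl
  -- validity and disjointness on levels
  have hlevel : ∀ n, (∀ p ∈ A n, BMValid σ p) ∧
      (∀ p ∈ A n, ∀ q ∈ A n, p ≠ q → Disjoint (σ p) (σ q)) := by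
    intro n
    induction n with
    | zero =>
      constructor
      · rintro p rfl; exact trivial
      · rintro p rfl q rfl h; exact absurd rfl h
    | succ n ih =>
      constructor
      · rintro l ⟨p, hp, V, hV, rfl⟩
        exact hext p V (ih.1 p hp) ((hFamSpec p (ih.1 p hp)).1 V hV)
      · rintro l ⟨p, hp, V, hV, rfl⟩ l' ⟨q, hq, V', hV', rfl⟩ hne
        have hpv := ih.1 p hp
        have hqv := ih.1 q hq
        have hVadm := (hFamSpec p hpv).1 V hV
        have hV'adm := (hFamSpec q hqv).1 V' hV'
        have h1 : σ (V :: p) ⊆ σ p := by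
          refine Set.Subset.trans ?_ hVadm.2.2
          exact (hσ _ (hext p V hpv hVadm)).2.2 V p rfl
        have h2 : σ (V' :: q) ⊆ σ q := by
          refine Set.Subset.trans ?_ hV'adm.2.2
          exact (hσ _ (hext q V' hqv hV'adm)).2.2 V' q rfl
        by_cases hpq : p = q
        · subst hpq
          have hVV' : V ≠ V' := by
            intro h; subst h; exact hne rfl
          exact (hFamSpec p hpv).2.1 V hV V' hV' hVV'
        · exact Disjoint.mono h1 h2 (ih.2 p hp q hq hpq)
  -- dense unions
  let D : ℕ → Set X := fun n => ⋃ p ∈ A n, σ p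
  have hDopen : ∀ n, IsOpen (D n) := by
    intro n
    refine isOpen_biUnion ?_
    intro p hp
    exact (hσ p ((hlevel n).1 p hp)).1
  have hD0 : D 0 = W := by
    simp [D, hA0, hWdef]
  have hDsub : ∀ n, D n ⊆ closure (D (n + 1)) := by
    intro n x hx
    rw [mem_closure_iff]
    intro O hOo hxO
    simp only [D, Set.mem_iUnion] at hx
    obtain ⟨p, hp, hxp⟩ := hx
    have hpv := (hlevel n).1 p hp
    have hadm : Adm p (O ∩ σ p) :=
      ⟨hOo.inter (hσ p hpv).1, ⟨x, hxO, hxp⟩, Set.inter_subset_right⟩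
    obtain ⟨V, hV, y, hy⟩ := (hFamSpec p hpv).2.2 (O ∩ σ p) hadm
    refine ⟨y, hy.1.1, ?_⟩
    simp only [D, Set.mem_iUnion]
    exact ⟨V :: p, (hAs n) ▸ ⟨p, hp, V, hV, rfl⟩, hy.2⟩
  have hWD : ∀ n, W ⊆ closure (D n) := by
    intro n
    induction n with
    | zero => rw [hD0]; exact subset_closure
    | succ n ih =>
      refine ih.trans ?_
      have := closure_mono (hDsub n)
      rwa [closure_closure] at this
  -- Baire
  let E : ℕ → Set X := fun n => D n ∪ (closure W)ᶜ
  have hEopen : ∀ n, IsOpen (E n) := fun n => (hDopen n).union isClosed_closure.isOpen_compl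
  have hEdense : ∀ n, Dense (E n) := by
    intro n x
    by_cases hx : x ∈ closure W
    · have : closure W ⊆ closure (D n) := by
        rw [← closure_closure (s := D n)]
        exact closure_mono (hWD n)
      exact closure_mono Set.subset_union_left (this hx)
    · exact subset_closure (Set.mem_union_right _ hx)
  have hdense : Dense (⋂ n, E n) := dense_iInter_of_isOpen hEopen hEdense
  obtain ⟨x, hxW, hxE⟩ := hdense.inter_open_nonempty W hWopen hWne
  have hxD : ∀ n, x ∈ D n := by
    intro n
    have := hxE
    rw [Set.mem_iInter] at this
    rcases this n with h | h
    · exact h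
    · exact absurd (subset_closure hxW) h
  -- branch
  have hstep : ∀ n (p : List (Set X)), p ∈ A n → x ∈ σ p →
      ∃ V, (V :: p) ∈ A (n + 1) ∧ x ∈ σ (V :: p) := by
    intro n p hp hxp
    have := hxD (n + 1)
    simp only [D, Set.mem_iUnion] at this
    obtain ⟨q, hq, hxq⟩ := this
    rw [hAs n] at hq
    obtain ⟨q', hq', V, hV, rfl⟩ := hq
    have hq'v := (hlevel n).1 q' hq'
    have hVadm := (hFamSpec q' hq'v).1 V hV
    have hsub : σ (V :: q') ⊆ σ q' := by
      refine Set.Subset.trans ?_ hVadm.2.2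
      exact (hσ _ (hext q' V hq'v hVadm)).2.2 V q' rfl
    have : q' = p := by
      by_contra hne
      exact Set.disjoint_left.mp ((hlevel n).2 q' hq' p hp hne) (hsub hxq) hxp
    subst this
    exact ⟨V, (hAs n) ▸ ⟨q', hq', V, hV, rfl⟩, hxq⟩
  have hx0 : x ∈ σ ([] : List (Set X)) := hxW
  let br : ∀ n : ℕ, {l : List (Set X) // l ∈ A n ∧ x ∈ σ l} := fun n =>
    Nat.rec ⟨[], rfl, hx0⟩
      (fun n ih =>
        ⟨(hstep n ih.1 ih.2.1 ih.2.2).choose :: ih.1,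
         (hstep n ih.1 ih.2.1 ih.2.2).choose_spec.1,
         (hstep n ih.1 ih.2.1 ih.2.2).choose_spec.2⟩) n
  refine ⟨x, fun n => (br n).1, rfl, ?_, ?_, ?_⟩
  · intro n; exact (hlevel n).1 _ (br n).2.1
  · intro n; exact ⟨(hstep n (br n).1 (br n).2.1 (br n).2.2).choose, rfl⟩
  · intro n; exact (br n).2.2

end BM



section Yside
variable {Y T : Type*} [TopologicalSpace Y] [CompactSpace Y] {e : Y → T → ℝ}

/-- coordinates vanish on closures -/
theorem vanish_on_closure (he : Topology.IsEmbedding e) {D : Set Y} {t : T}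
    (h : ∀ d ∈ D, e d t = 0) : ∀ y ∈ closure D, e y t = 0 := by
  have hc : IsClosed {y : Y | e y t = 0} := by
    have : Continuous fun y : Y => e y t := (continuous_apply t).comp he.continuous
    exact isClosed_singleton.preimage this
  exact fun y hy => closure_minimal (fun d hd => h d hd) hc hy

/-- the Σ-points are dense in every dense Gδ -/
theorem dense_inter_sigma (he : Topology.IsEmbedding e)
    (hsigma : Dense {y : Y | {t : T | e y t ≠ 0}.Countable})
    {B₁ : Set Y} (hBd : Dense B₁) (hBG : IsGδ B₁) :
    Dense (B₁ ∩ {y : Y | {t : T | e y t ≠ 0}.Countable}) := by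
  classical
  haveI : T2Space Y := he.t2Space
  obtain ⟨𝒯, h𝒯o, h𝒯c, h𝒯eq⟩ := hBG
  obtain ⟨U, hU⟩ := (h𝒯c.insert univ).exists_eq_range (insert_nonempty _ _)
  have hUopen : ∀ n, IsOpen (U n) := by
    intro n
    have : U n ∈ insert univ 𝒯 := hU ▸ mem_range_self n
    rcases this with h | h
    · rw [h]; exact isOpen_univ
    · exact h𝒯o _ h
  have hB₁ : B₁ = ⋂ n, U n := by
    rw [h𝒯eq]
    ext x
    simp only [mem_sInter, mem_iInter]
    constructor
    · intro hx n
      have : U n ∈ insert univ 𝒯 := hU ▸ mem_range_self n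
      rcases this with h | h
      · rw [h]; exact mem_univ x
      · exact hx _ h
    · intro hx s hs
      have : s ∈ range U := by rw [← hU]; exact Set.mem_insert_of_mem _ hs
      obtain ⟨n, rfl⟩ := this
      exact hx n
  rw [dense_iff_inter_open]
  intro O hOo hOne
  have key : ∀ V : Set Y, IsOpen V → V.Nonempty → ∀ n : ℕ, ∃ p : Set Y × Y,
      IsOpen p.1 ∧ p.1.Nonempty ∧ closure p.1 ⊆ V ∩ U n ∧ p.2 ∈ p.1 ∧
      {t : T | e p.2 t ≠ 0}.Countable := by
    intro V hVo hVne n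
    have hVU : (V ∩ U n).Nonempty := by
      obtain ⟨x, hx⟩ := hBd.inter_open_nonempty V hVo hVne
      refine ⟨x, hx.1, ?_⟩
      have := hx.2
      rw [hB₁] at this
      exact mem_iInter.mp this n
    obtain ⟨x, hx⟩ := hVU
    have hmem : V ∩ U n ∈ 𝓝 x := (hVo.inter (hUopen n)).mem_nhds hx
    obtain ⟨t, htn, htc, hts⟩ := exists_mem_nhds_isClosed_subset hmem
    have hxint : x ∈ interior t := mem_interior_iff_mem_nhds.mpr htn
    obtain ⟨z, hz⟩ := hsigma.inter_open_nonempty (interior t) isOpen_interior ⟨x, hxint⟩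
    exact ⟨(interior t, z), isOpen_interior, ⟨z, hz.1⟩,
      (closure_minimal interior_subset htc).trans hts, hz.1, hz.2⟩
  let g : ℕ → {V : Set Y // IsOpen V ∧ V.Nonempty} := fun n =>
    Nat.rec ⟨O, hOo, hOne⟩
      (fun n ih => ⟨(key ih.1 ih.2.1 ih.2.2 n).choose.1,
        (key ih.1 ih.2.1 ih.2.2 n).choose_spec.1,
        (key ih.1 ih.2.1 ih.2.2 n).choose_spec.2.1⟩) n
  let z : ℕ → Y := fun n => (key (g n).1 (g n).2.1 (g n).2.2 n).choose.2
  have hchain : ∀ n, closure (g (n + 1)).1 ⊆ (g n).1 ∩ U n := fun n =>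
    (key (g n).1 (g n).2.1 (g n).2.2 n).choose_spec.2.2.1
  have hz1 : ∀ n, z n ∈ (g (n + 1)).1 := fun n =>
    (key (g n).1 (g n).2.1 (g n).2.2 n).choose_spec.2.2.2.1
  have hz2 : ∀ n, {t : T | e (z n) t ≠ 0}.Countable := fun n =>
    (key (g n).1 (g n).2.1 (g n).2.2 n).choose_spec.2.2.2.2
  have hdec : ∀ n m, n ≤ m → (g m).1 ⊆ (g n).1 := by
    intro n m hnm
    induction m with
    | zero => rw [Nat.le_zero] at hnm; subst hnm; exact Set.Subset.rfl
    | succ m ih =>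
      rcases Nat.lt_or_ge n (m + 1) with h | h
      · have : n ≤ m := Nat.lt_succ_iff.mp h
        exact (subset_closure.trans ((hchain m).trans inter_subset_left)).trans (ih this)
      · have : n = m + 1 := le_antisymm hnm h
        subst this; exact Set.Subset.rfl
  obtain ⟨y, hy⟩ := exists_clusterPt_of_compactSpace (map z atTop)
  have hytail : ∀ m : ℕ, y ∈ closure (z '' Set.Ici m) := by
    intro m
    rw [mem_closure_iff_clusterPt]
    refine hy.mono (le_principal_iff.mpr ?_)
    exact mem_map.mpr (mem_of_superset (Ici_mem_atTop m) (subset_preimage_image z _))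
  have hyg : ∀ m : ℕ, y ∈ (g m).1 ∩ U m := by
    intro m
    refine hchain m ?_
    refine closure_mono ?_ (hytail m)
    rintro _ ⟨k, hk, rfl⟩
    exact hdec (m + 1) (k + 1) (Nat.succ_le_succ hk) (hz1 k)
  refine ⟨y, (hyg 0).1, ?_, ?_⟩
  · rw [hB₁, mem_iInter]; exact fun n => (hyg n).2
  · have hsub : {t : T | e y t ≠ 0} ⊆ ⋃ n, {t : T | e (z n) t ≠ 0} := by
      intro t ht
      by_contra hc
      simp only [mem_iUnion, not_exists, mem_setOf_eq, not_not] at hc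
      have : e y t = 0 := by
        refine vanish_on_closure he (D := z '' Set.Ici 0) ?_ y (hytail 0)
        rintro _ ⟨k, _, rfl⟩; exact hc k
      exact ht this
    exact (Set.countable_iUnion hz2).mono hsub

open Classical in
def GoodPair (e : Y → T → ℝ) (B : Set Y) (S : Set T) (M : Set Y) : Prop :=
  S.Countable ∧ M.Countable ∧ M ⊆ B ∧
    ∀ y : Y, ∃ y' ∈ closure M, ∀ t, e y' t = if t ∈ S then e y t else 0

theorem goodPair_exists (he : Topology.IsEmbedding e) [Nonempty Y] {B : Set Y}
    (hBd : Dense B) (hBsupp : ∀ b ∈ B, {t : T | e b t ≠ 0}.Countable)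
    (S₀ : Set T) (hS₀ : S₀.Countable) :
    ∃ S M, S₀ ⊆ S ∧ GoodPair e B S M := by
  classical
  haveI : T2Space Y := he.t2Space
  obtain ⟨b0, hb0⟩ := hBd.nonempty
  -- witnesses for rational boxes
  let w : Finset (T × ℚ) × ℕ → Y := fun p =>
    if h : ∃ b ∈ B, ∀ q ∈ p.1, |e b q.1 - (q.2 : ℝ)| < 1 / (p.2 + 1) then h.choose else b0
  have hwB : ∀ p, w p ∈ B := by
    intro p
    by_cases h : ∃ b ∈ B, ∀ q ∈ p.1, |e b q.1 - (q.2 : ℝ)| < 1 / (p.2 + 1)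
    · simp only [w, dif_pos h]; exact h.choose_spec.1
    · simp only [w, dif_neg h]; exact hb0
  have hwprop : ∀ p, (∃ b ∈ B, ∀ q ∈ p.1, |e b q.1 - (q.2 : ℝ)| < 1 / (p.2 + 1)) →
      ∀ q ∈ p.1, |e (w p) q.1 - (q.2 : ℝ)| < 1 / (p.2 + 1) := by
    intro p h
    simp only [w, dif_pos h]
    exact h.choose_spec.2
  -- boxes over a coordinate set
  let Q : Set T → Set (Finset (T × ℚ) × ℕ) := fun S => {p | ∀ q ∈ p.1, q.1 ∈ S}
  have hQc : ∀ S : Set T, S.Countable → (Q S).Countable := by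
    intro S hS
    have h1 : {F : Finset (T × ℚ) | (F : Set (T × ℚ)) ⊆ S ×ˢ (univ : Set ℚ)}.Countable := by
      have h2 : {s : Set (T × ℚ) | s.Finite ∧ s ⊆ S ×ˢ (univ : Set ℚ)}.Countable :=
        countable_setOf_finite_subset (hS.prod countable_univ)
      have h3 := h2.preimage (f := fun F : Finset (T × ℚ) => (F : Set (T × ℚ)))
        Finset.coe_injective
      refine h3.mono ?_
      intro F hF
      exact ⟨F.finite_toSet, hF⟩
    have : Q S ⊆ (fun p : Finset (T × ℚ) × ℕ => p) ''
        ({F : Finset (T × ℚ) | (F : Set (T × ℚ)) ⊆ S ×ˢ (univ : Set ℚ)} ×ˢ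
          (univ : Set ℕ)) := by
      rintro ⟨F, k⟩ hp
      refine ⟨(F, k), ⟨?_, mem_univ _⟩, rfl⟩
      intro q hq
      exact ⟨hp q hq, mem_univ _⟩
    exact ((h1.prod countable_univ).image _).mono this
  -- the recursion
  let step : Set T × Set Y → Set T × Set Y := fun SM =>
    ((SM.1 ∪ ⋃ m ∈ SM.2 ∪ w '' Q SM.1, {t | e m t ≠ 0}), SM.2 ∪ w '' Q SM.1)
  let SM : ℕ → Set T × Set Y := fun n => Nat.rec (S₀, (∅ : Set Y)) (fun _ p => step p) n
  have hSM0 : SM 0 = (S₀, ∅) := rfl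
  have hSMs : ∀ n, SM (n + 1) = step (SM n) := fun _ => rfl
  have hmonoS : ∀ n, (SM n).1 ⊆ (SM (n + 1)).1 := fun n => subset_union_left
  have hmonoM : ∀ n, (SM n).2 ⊆ (SM (n + 1)).2 := fun n => subset_union_left
  have hmonoS' : ∀ n m, n ≤ m → (SM n).1 ⊆ (SM m).1 := by
    intro n m hnm
    induction m with
    | zero => rw [Nat.le_zero] at hnm; subst hnm; exact Set.Subset.rfl
    | succ m ih =>
      rcases Nat.lt_or_ge n (m + 1) with h | h
      · exact (ih (Nat.lt_succ_iff.mp h)).trans (hmonoS m)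
      · have : n = m + 1 := le_antisymm hnm h
        subst this; exact Set.Subset.rfl
  have hMB : ∀ n, (SM n).2 ⊆ B := by
    intro n
    induction n with
    | zero => exact empty_subset _
    | succ n ih =>
      rintro m (hm | ⟨p, _, rfl⟩)
      · exact ih hm
      · exact hwB p
  have hcnt : ∀ n, (SM n).1.Countable ∧ (SM n).2.Countable := by
    intro n
    induction n with
    | zero => exact ⟨hS₀, countable_empty⟩
    | succ n ih =>
      have hM' : ((SM n).2 ∪ w '' Q (SM n).1).Countable :=
        ih.2.union ((hQc _ ih.1).image w)
      constructor
      · refine ih.1.union (Countable.biUnion hM' ?_)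
        intro m hm
        rcases hm with hm | ⟨p, _, rfl⟩
        · exact hBsupp m (hMB n hm)
        · exact hBsupp _ (hwB p)
      · exact hM'
  have hsupp : ∀ m, (∃ n, m ∈ (SM n).2) → ∀ t, e m t ≠ 0 → t ∈ ⋃ n, (SM n).1 := by
    rintro m ⟨n, hm⟩ t ht
    induction n with
    | zero => exact absurd hm (notMem_empty m)
    | succ n ih =>
      rcases hm with hm | hm
      · exact ih hm
      · refine mem_iUnion.mpr ⟨n + 1, ?_⟩
        refine Set.mem_union_right _ ?_
        exact mem_biUnion (Set.mem_union_right _ hm) ht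
  refine ⟨⋃ n, (SM n).1, ⋃ n, (SM n).2, ?_, ?_, ?_, ?_, ?_⟩
  · exact (subset_iUnion (fun n => (SM n).1) 0)
  · exact countable_iUnion fun n => (hcnt n).1
  · exact countable_iUnion fun n => (hcnt n).2
  · exact iUnion_subset fun n => hMB n
  · -- retraction property
    intro y
    set S : Set T := ⋃ n, (SM n).1 with hSdef
    set M : Set Y := ⋃ n, (SM n).2 with hMdef
    set u : T → ℝ := fun t => if t ∈ S then e y t else 0 with hu
    have hue : u ∈ closure (e '' M) := by
      rw [mem_closure_iff]
      intro O hOo hOu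
      obtain ⟨I, Uo, hUo, hsub⟩ := isOpen_pi_iff.mp hOo u hOu
      have hδ : ∀ a ∈ I, ∃ δ : ℝ, 0 < δ ∧ Metric.ball (u a) δ ⊆ Uo a := by
        intro a ha
        obtain ⟨δ, hδ1, hδ2⟩ := Metric.isOpen_iff.mp (hUo a ha).1 (u a) (hUo a ha).2
        exact ⟨δ, hδ1, hδ2⟩
      choose! δ hδpos hδsub using hδ
      have hk : ∃ k : ℕ, ∀ a ∈ I, (2 : ℝ) / (k + 1) < δ a := by
        have hex : ∀ a ∈ I, ∃ k : ℕ, (2 : ℝ) / (k + 1) < δ a := by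
          intro a ha
          obtain ⟨k, hk⟩ := exists_nat_one_div_lt (div_pos (hδpos a ha) two_pos)
          refine ⟨k, ?_⟩
          have h2 : (2 : ℝ) / (k + 1) = 2 * (1 / (k + 1)) := by ring
          rw [h2]; linarith
        choose! kk hkk using hex
        refine ⟨I.sup kk, fun a ha => lt_of_le_of_lt ?_ (hkk a ha)⟩
        have hle : kk a ≤ I.sup kk := Finset.le_sup ha
        have hle' : ((kk a : ℕ) : ℝ) + 1 ≤ ((I.sup kk : ℕ) : ℝ) + 1 := by
          have : ((kk a : ℕ) : ℝ) ≤ ((I.sup kk : ℕ) : ℝ) := Nat.cast_le.mpr hle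
          linarith
        gcongr
      obtain ⟨k, hkprop⟩ := hk
      -- the finitely many S-coordinates
      set F' : Finset T := I.filter (fun t => t ∈ S) with hF'
      have hF'S : (F' : Set T) ⊆ S := by
        intro a ha
        simp only [hF', Finset.coe_filter, mem_setOf_eq] at ha
        exact ha.2
      have hdir : Directed (· ⊆ ·) (fun n => (SM n).1) :=
        (monotone_nat_of_le_succ hmonoS).directed_le
      have hF'n : ∃ n, (F' : Set T) ⊆ (SM n).1 :=
        hdir.exists_mem_subset_of_finset_subset_biUnion (fun a ha => hF'S ha)
      obtain ⟨n, hF'n⟩ := hF'n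
      have hqex : ∀ a ∈ F', ∃ r : ℚ, |e y a - (r : ℝ)| < 1 / (k + 1) := by
        intro a _
        exact exists_rat_near _ (by positivity)
      choose! q hq using hqex
      set G : Finset (T × ℚ) := F'.image (fun t => (t, q t)) with hG
      have hGQ : (G, k) ∈ Q (SM n).1 := by
        rintro ⟨t, r⟩ hmemG
        simp only [hG, Finset.mem_image] at hmemG
        obtain ⟨t0, ht0, heq⟩ := hmemG
        have ht : t = t0 := by
          have := congrArg Prod.fst heq
          exact this.symm
        rw [ht]
        exact hF'n ht0
      have hbox : ∃ b ∈ B, ∀ p ∈ (G, k).1, |e b p.1 - (p.2 : ℝ)| < 1 / ((G, k).2 + 1) := by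
        have hO'o : IsOpen (⋂ p ∈ G, {b : Y | |e b p.1 - (p.2 : ℝ)| < 1 / (k + 1)}) := by
          refine isOpen_biInter_finset ?_
          rintro ⟨t, r⟩ _
          have hcont : Continuous fun b : Y => e b t := (continuous_apply t).comp he.continuous
          have : {b : Y | |e b t - (r : ℝ)| < 1 / (k + 1)}
              = (fun b : Y => e b t) ⁻¹' Metric.ball (r : ℝ) (1 / (k + 1)) := by
            ext b
            simp [Metric.mem_ball, Real.dist_eq]
          rw [this]
          exact Metric.isOpen_ball.preimage hcont
        have hyO' : y ∈ ⋂ p ∈ G, {b : Y | |e b p.1 - (p.2 : ℝ)| < 1 / (k + 1)} := by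
          simp only [mem_iInter]
          rintro ⟨t, r⟩ hmemG
          simp only [hG, Finset.mem_image] at hmemG
          obtain ⟨t0, ht0, heq⟩ := hmemG
          have ht : t = t0 ∧ r = q t0 := by
            constructor
            · exact (congrArg Prod.fst heq).symm
            · exact (congrArg Prod.snd heq).symm
          rw [ht.1, ht.2]
          exact hq t0 ht0
        obtain ⟨b, hb1, hb2⟩ := hBd.inter_open_nonempty _ hO'o ⟨y, hyO'⟩
        refine ⟨b, hb2, ?_⟩
        intro p hp
        exact mem_iInter₂.mp hb1 p hp
      set m : Y := w (G, k) with hm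
      have hmM : m ∈ M := by
        refine mem_iUnion.mpr ⟨n + 1, ?_⟩
        exact Set.mem_union_right _ ⟨(G, k), hGQ, rfl⟩
      have hmbox : ∀ p ∈ G, |e m p.1 - (p.2 : ℝ)| < 1 / (k + 1) := hwprop (G, k) hbox
      refine ⟨e m, ?_, ⟨m, hmM, rfl⟩⟩
      refine hsub ?_
      rw [Set.mem_pi]
      intro a haI
      have ha : a ∈ I := haI
      by_cases haS : a ∈ S
      · have haF' : a ∈ F' := by
          rw [hF']
          exact Finset.mem_filter.mpr ⟨ha, haS⟩
        have hmemG : (a, q a) ∈ G := by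
          rw [hG]
          exact Finset.mem_image_of_mem _ haF'
        have h1 : |e m a - (q a : ℝ)| < 1 / (k + 1) := hmbox _ hmemG
        have h2 : |e y a - (q a : ℝ)| < 1 / (k + 1) := hq a haF'
        have hua : u a = e y a := if_pos haS
        have h3 : |e m a - u a| < 2 / (k + 1) := by
          rw [hua]
          have : e m a - e y a = (e m a - (q a : ℝ)) - (e y a - (q a : ℝ)) := by ring
          rw [this]
          calc |(e m a - (q a : ℝ)) - (e y a - (q a : ℝ))|
              ≤ |e m a - (q a : ℝ)| + |e y a - (q a : ℝ)| := abs_sub _ _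
            _ < 1 / (k + 1) + 1 / (k + 1) := by linarith
            _ = 2 / (k + 1) := by ring
        refine hδsub a ha ?_
        rw [Metric.mem_ball, Real.dist_eq]
        exact h3.trans (hkprop a ha)
      · have hma : e m a = 0 := by
          by_contra hcon
          exact haS (hsupp m ⟨n + 1, Set.mem_union_right _ ⟨(G, k), hGQ, rfl⟩⟩ a hcon)
        have hua : u a = 0 := if_neg haS
        have : e m a = u a := by rw [hma, hua]
        rw [this]
        exact (hUo a ha).2
    have hMclosed : IsClosed (e '' closure M) :=
      ((isClosed_closure.isCompact).image he.continuous).isClosed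
    have h2 : closure (e '' M) ⊆ e '' closure M :=
      closure_minimal (image_mono (f := e) subset_closure) hMclosed
    obtain ⟨y', hy', hey'⟩ := h2 hue
    exact ⟨y', hy', fun t => by rw [hey']⟩

theorem secondCountable_closure (he : Topology.IsEmbedding e) {D : Set Y}
    (hD : D.Countable) (hsupp : ∀ d ∈ D, {t : T | e d t ≠ 0}.Countable) :
    SecondCountableTopology (closure D) := by
  haveI : T2Space Y := he.t2Space
  set S : Set T := ⋃ d ∈ D, {t | e d t ≠ 0} with hS
  have hSc : S.Countable := hD.biUnion hsupp
  haveI := hSc.to_subtype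
  have hvanish : ∀ y ∈ closure D, ∀ t ∉ S, e y t = 0 := by
    intro y hy t ht
    refine vanish_on_closure he ?_ y hy
    intro d hd
    by_contra hcon
    exact ht (mem_biUnion hd hcon)
  let ψ : closure D → (S → ℝ) := fun k t => e k.1 t.1
  have hψc : Continuous ψ := by
    refine continuous_pi ?_
    intro t
    exact (continuous_apply (t : T)).comp (he.continuous.comp continuous_subtype_val)
  have hψi : Function.Injective ψ := by
    rintro ⟨y, hy⟩ ⟨y', hy'⟩ hψ
    have : e y = e y' := by
      funext t
      by_cases ht : t ∈ S
      · exact congrFun hψ ⟨t, ht⟩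
      · rw [hvanish y hy t ht, hvanish y' hy' t ht]
    exact Subtype.ext (he.injective this)
  haveI : CompactSpace (closure D) :=
    isCompact_iff_compactSpace.mp (isClosed_closure.isCompact)
  exact (hψc.isClosedEmbedding hψi).isEmbedding.secondCountableTopology

theorem uniform_approx (he : Topology.IsEmbedding e) (g : Y → ℝ) (hg : Continuous g)
    {η : ℝ} (hη : 0 < η) :
    ∃ (F : Finset T) (δ : ℝ), 0 < δ ∧
      ∀ y y', (∀ t ∈ F, |e y t - e y' t| < δ) → |g y - g y'| < η := by
  classical
  haveI : T2Space Y := he.t2Space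
  set C : Set (Y × Y) := {p | η ≤ |g p.1 - g p.2|} with hC
  have hCc : IsClosed C := by
    have hcont : Continuous fun p : Y × Y => |g p.1 - g p.2| :=
      ((hg.comp continuous_fst).sub (hg.comp continuous_snd)).abs
    exact isClosed_le continuous_const hcont
  have hCcpt : IsCompact C := hCc.isCompact
  rcases isEmpty_or_nonempty T with hT | hT
  · refine ⟨∅, 1, one_pos, fun y y' _ => ?_⟩
    have hyy : y = y' := he.injective (funext fun t => (hT.elim t))
    subst hyy
    simpa using hη
  have hneq : ∀ p ∈ C, ∃ t : T, e p.1 t ≠ e p.2 t := by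
    rintro ⟨y, y'⟩ hp
    have hyy : y ≠ y' := by
      rintro rfl
      simp only [hC, mem_setOf_eq, sub_self, abs_zero] at hp
      linarith
    by_contra hcon
    push_neg at hcon
    exact hyy (he.injective (funext hcon))
  choose! tt htt using hneq
  let d : Y × Y → ℝ := fun p => |e p.1 (tt p) - e p.2 (tt p)|
  have hdpos : ∀ p ∈ C, 0 < d p := by
    intro p hp
    exact abs_pos.mpr (sub_ne_zero.mpr (htt p hp))
  let N : Y × Y → Set (Y × Y) := fun p =>
    ((fun q : Y × Y => e q.1 (tt p)) ⁻¹' Metric.ball (e p.1 (tt p)) (d p / 3)) ∩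
      ((fun q : Y × Y => e q.2 (tt p)) ⁻¹' Metric.ball (e p.2 (tt p)) (d p / 3))
  have hNopen : ∀ p, IsOpen (N p) := by
    intro p
    have h1 : Continuous fun q : Y × Y => e q.1 (tt p) :=
      (continuous_apply (tt p)).comp (he.continuous.comp continuous_fst)
    have h2 : Continuous fun q : Y × Y => e q.2 (tt p) :=
      (continuous_apply (tt p)).comp (he.continuous.comp continuous_snd)
    exact (Metric.isOpen_ball.preimage h1).inter (Metric.isOpen_ball.preimage h2)
  have hNmem : ∀ p ∈ C, p ∈ N p := by
    intro p hp
    have hd3 : 0 < d p / 3 := div_pos (hdpos p hp) (by norm_num)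
    exact ⟨Metric.mem_ball_self hd3, Metric.mem_ball_self hd3⟩
  obtain ⟨P, hP⟩ := hCcpt.elim_nhds_subcover' (fun p _ => N p)
    (fun p hp => (hNopen p).mem_nhds (hNmem p hp))
  by_cases hPne : P.Nonempty
  · refine ⟨P.image (fun p => tt p.1), P.inf' hPne (fun p => d p.1 / 3), ?_, ?_⟩
    · rw [Finset.lt_inf'_iff]
      intro p _
      exact div_pos (hdpos p.1 p.2) (by norm_num)
    · intro y y' hclose
      by_contra hcon
      have hyC : (y, y') ∈ C := not_lt.mp hcon
      obtain ⟨p, hpP, hpN⟩ := mem_iUnion₂.mp (hP hyC)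
      have h1 : |e y (tt p.1) - e p.1.1 (tt p.1)| < d p.1 / 3 := by
        have := Metric.mem_ball.mp hpN.1
        rwa [Real.dist_eq] at this
      have h2 : |e y' (tt p.1) - e p.1.2 (tt p.1)| < d p.1 / 3 := by
        have := Metric.mem_ball.mp hpN.2
        rwa [Real.dist_eq] at this
      have h3 : d p.1 / 3 ≤ |e y (tt p.1) - e y' (tt p.1)| := by
        have habs : d p.1 = |e p.1.1 (tt p.1) - e p.1.2 (tt p.1)| := rfl
        have := abs_sub_abs_le_abs_sub (e p.1.1 (tt p.1) - e p.1.2 (tt p.1))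
          ((e p.1.1 (tt p.1) - e y (tt p.1)) + (e y' (tt p.1) - e p.1.2 (tt p.1)))
        have h4 : |(e p.1.1 (tt p.1) - e y (tt p.1)) + (e y' (tt p.1) - e p.1.2 (tt p.1))|
            ≤ |e p.1.1 (tt p.1) - e y (tt p.1)| + |e y' (tt p.1) - e p.1.2 (tt p.1)| :=
          abs_add_le _ _
        rw [abs_sub_comm] at h1
        have h5 : (e p.1.1 (tt p.1) - e p.1.2 (tt p.1)) -
            ((e p.1.1 (tt p.1) - e y (tt p.1)) + (e y' (tt p.1) - e p.1.2 (tt p.1)))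
            = e y (tt p.1) - e y' (tt p.1) := by ring
        rw [h5] at this
        calc d p.1 / 3 = d p.1 - 2 * (d p.1 / 3) := by ring
          _ ≤ |e y (tt p.1) - e y' (tt p.1)| := by
              rw [habs]
              have := this
              linarith [h1, h2, h4, this]
      have h6 : |e y (tt p.1) - e y' (tt p.1)| < P.inf' hPne (fun p => d p.1 / 3) :=
        hclose _ (Finset.mem_image_of_mem _ hpP)
      have h7 : P.inf' hPne (fun p => d p.1 / 3) ≤ d p.1 / 3 := Finset.inf'_le _ hpP
      linarith
  · refine ⟨∅, 1, one_pos, ?_⟩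
    intro y y' _
    by_contra hcon
    have hyC : (y, y') ∈ C := not_lt.mp hcon
    obtain ⟨p, hpP, _⟩ := mem_iUnion₂.mp (hP hyC)
    exact hPne ⟨p, hpP⟩

end Yside

section Engine

variable {X Y T : Type*} [TopologicalSpace X] [BaireSpace X]
  [TopologicalSpace Y] [CompactSpace Y] {e : Y → T → ℝ}

theorem engine_lemma (he : Topology.IsEmbedding e)
    (f : X × Y → ℝ) (hf2 : ∀ x, Continuous fun y => f (x, y))
    {B : Set Y} (hBsupp : ∀ b ∈ B, {t : T | e b t ≠ 0}.Countable)
    (hBqc : ∀ b ∈ B, QuasiContinuous fun x : X => f (x, b))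
    {ε : ℝ} (hε : 0 < ε) (V : Set X) (D : Set Y) :
    ∃ U : Set X, IsOpen V → V.Nonempty → D.Countable → D ⊆ B →
      (IsOpen U ∧ U.Nonempty ∧ U ⊆ V ∧
        ∀ x₁ ∈ U, ∀ x₂ ∈ U, ∀ y ∈ closure D, |f (x₁, y) - f (x₂, y)| ≤ ε) := by
  classical
  by_cases hyp : IsOpen V ∧ V.Nonempty ∧ D.Countable ∧ D ⊆ B
  swap
  · exact ⟨∅, fun h1 h2 h3 h4 => absurd ⟨h1, h2, h3, h4⟩ hyp⟩
  obtain ⟨hVo, hVne, hDc, hDB⟩ := hyp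
  haveI hK2 : SecondCountableTopology (closure D) :=
    secondCountable_closure he hDc (fun d hd => hBsupp d (hDB hd))
  haveI : CompactSpace (closure D) :=
    isCompact_iff_compactSpace.mp (isClosed_closure.isCompact)
  set ℬ := TopologicalSpace.countableBasis (closure D) with hℬ
  haveI : Countable ↥ℬ := (TopologicalSpace.countable_countableBasis _).to_subtype
  let Tset : Finset (↥ℬ × ℚ) → Set X := fun s =>
    {x | ∀ p ∈ s, ∀ (d : Y) (hd : d ∈ D),
      (⟨d, subset_closure hd⟩ : closure D) ∈ (p.1 : Set (closure D)) →
        |f (x, d) - (p.2 : ℝ)| ≤ ε / 2}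
  let covers : Finset (↥ℬ × ℚ) → Prop := fun s =>
    ∀ k : closure D, ∃ p ∈ s, k ∈ (p.1 : Set (closure D))
  let C : Finset (↥ℬ × ℚ) → Set X := fun s =>
    if covers s then closure (Tset s) else ∅
  have hCclosed : ∀ s, IsClosed (C s) := by
    intro s
    by_cases h : covers s
    · simp only [C, if_pos h]; exact isClosed_closure
    · simp only [C, if_neg h]; exact isClosed_empty
  have hCuniv : ⋃ s, C s = univ := by
    refine eq_univ_of_forall ?_
    intro x
    have hgx : Continuous fun k : closure D => f (x, k.1) :=
      (hf2 x).comp continuous_subtype_val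
    have hOr : ∀ k : closure D, ∃ (O : Set (closure D)) (r : ℚ), O ∈ ℬ ∧ k ∈ O ∧
        ∀ k' ∈ O, |f (x, k'.1) - (r : ℝ)| ≤ ε / 2 := by
      intro k
      obtain ⟨r, hr⟩ := exists_rat_near (f (x, k.1)) (show (0 : ℝ) < ε / 4 by linarith)
      have hnb : (fun k' : closure D => f (x, k'.1)) ⁻¹'
          Metric.ball (f (x, k.1)) (ε / 4) ∈ 𝓝 k :=
        hgx.continuousAt (Metric.ball_mem_nhds _ (by linarith))
      obtain ⟨O, hOB, hkO, hOsub⟩ :=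
        (TopologicalSpace.isBasis_countableBasis (closure D)).mem_nhds_iff.mp hnb
      refine ⟨O, r, hOB, hkO, ?_⟩
      intro k' hk'
      have h1 : |f (x, k'.1) - f (x, k.1)| < ε / 4 := by
        have := hOsub hk'
        rw [Set.mem_preimage, Metric.mem_ball, Real.dist_eq] at this
        exact this
      calc |f (x, k'.1) - (r : ℝ)|
          = |(f (x, k'.1) - f (x, k.1)) + (f (x, k.1) - (r : ℝ))| := by ring_nf
        _ ≤ |f (x, k'.1) - f (x, k.1)| + |f (x, k.1) - (r : ℝ)| := abs_add_le _ _
        _ ≤ ε / 2 := by linarith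
    choose O r hOB hkO hOval using hOr
    obtain ⟨t, -, hcover⟩ := isCompact_univ.elim_nhds_subcover (fun k => O k)
      (fun k _ => ((TopologicalSpace.isBasis_countableBasis
        (closure D)).isOpen (hOB k)).mem_nhds (hkO k))
    let s : Finset (↥ℬ × ℚ) := t.image (fun k => (⟨O k, hOB k⟩, r k))
    have hcov : covers s := by
      intro k
      have := hcover (mem_univ k)
      rw [Set.mem_iUnion₂] at this
      obtain ⟨k0, hk0, hk0m⟩ := this
      exact ⟨(⟨O k0, hOB k0⟩, r k0), Finset.mem_image_of_mem _ hk0, hk0m⟩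
    have hxT : x ∈ Tset s := by
      intro p hp d hd hdm
      simp only [s, Finset.mem_image] at hp
      obtain ⟨k0, hk0, rfl⟩ := hp
      exact hOval k0 ⟨d, subset_closure hd⟩ hdm
    refine mem_iUnion.mpr ⟨s, ?_⟩
    simp only [C, if_pos hcov]
    exact subset_closure hxT
  have hdense := dense_iUnion_interior_of_closed hCclosed hCuniv
  obtain ⟨x₀, hx₀V, hx₀i⟩ := hdense.inter_open_nonempty V hVo hVne
  obtain ⟨s, hx₀s⟩ := mem_iUnion.mp hx₀i
  have hcov : covers s := by
    by_contra h
    simp only [C, if_neg h, interior_empty] at hx₀s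
    exact absurd hx₀s (notMem_empty _)
  have hCs : C s = closure (Tset s) := if_pos hcov
  rw [hCs] at hx₀s
  set U : Set X := V ∩ interior (closure (Tset s)) with hU
  have hUo : IsOpen U := hVo.inter isOpen_interior
  have hUne : U.Nonempty := ⟨x₀, hx₀V, hx₀s⟩
  have hkey : ∀ x ∈ U, ∀ p ∈ s, ∀ (d : Y) (hd : d ∈ D),
      (⟨d, subset_closure hd⟩ : closure D) ∈ (p.1 : Set (closure D)) →
      |f (x, d) - (p.2 : ℝ)| ≤ ε / 2 := by
    intro x hx p hp d hd hdm
    have hUnx : U ∈ 𝓝 x := hUo.mem_nhds hx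
    refine le_of_forall_pos_le_add ?_
    intro δ hδ
    obtain ⟨G, hGo, hGne, hGU, hGim⟩ := hBqc d (hDB hd) x U hUnx
      (Metric.ball (f (x, d)) δ) (Metric.ball_mem_nhds _ hδ)
    obtain ⟨x', hx'⟩ := hGne
    have hx'cl : x' ∈ closure (Tset s) :=
      interior_subset ((hGU.trans inter_subset_right) hx')
    obtain ⟨x'', hx''G, hx''T⟩ := mem_closure_iff.mp hx'cl G hGo hx'
    have h1 : |f (x'', d) - (p.2 : ℝ)| ≤ ε / 2 := hx''T p hp d hd hdm
    have h2 : |f (x'', d) - f (x, d)| < δ := by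
      have : f (x'', d) ∈ Metric.ball (f (x, d)) δ := hGim ⟨x'', hx''G, rfl⟩
      rwa [Metric.mem_ball, Real.dist_eq] at this
    calc |f (x, d) - (p.2 : ℝ)|
        = |(f (x'', d) - (p.2 : ℝ)) - (f (x'', d) - f (x, d))| := by ring_nf
      _ ≤ |f (x'', d) - (p.2 : ℝ)| + |f (x'', d) - f (x, d)| := abs_sub _ _
      _ ≤ ε / 2 + δ := by linarith
  have hpair : ∀ x₁ ∈ U, ∀ x₂ ∈ U, ∀ d ∈ D, |f (x₁, d) - f (x₂, d)| ≤ ε := by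
    intro x₁ h₁ x₂ h₂ d hd
    obtain ⟨p, hp, hdm⟩ := hcov ⟨d, subset_closure hd⟩
    have e₁ := hkey x₁ h₁ p hp d hd hdm
    have e₂ := hkey x₂ h₂ p hp d hd hdm
    calc |f (x₁, d) - f (x₂, d)|
        = |(f (x₁, d) - (p.2 : ℝ)) - (f (x₂, d) - (p.2 : ℝ))| := by ring_nf
      _ ≤ |f (x₁, d) - (p.2 : ℝ)| + |f (x₂, d) - (p.2 : ℝ)| := abs_sub _ _
      _ ≤ ε := by linarith
  refine ⟨U, fun _ _ _ _ => ⟨hUo, hUne, inter_subset_left, ?_⟩⟩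
  intro x₁ h₁ x₂ h₂ y hy
  have hclosed : IsClosed {y : Y | |f (x₁, y) - f (x₂, y)| ≤ ε} := by
    have hcont : Continuous fun y : Y => |f (x₁, y) - f (x₂, y)| :=
      ((hf2 x₁).sub (hf2 x₂)).abs
    exact isClosed_le hcont continuous_const
  exact closure_minimal (fun d hd => hpair x₁ h₁ x₂ h₂ d hd) hclosed hy

end Engine


section Machinery
variable {X Y T : Type*}

/-- one step of the strategy construction -/
noncomputable def namStep (e : Y → T → ℝ) (f : X × Y → ℝ) (ε : ℝ)
    (eng : Set X → Set Y → Set X) (wit : Set X → X × X × Y)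
    (qcG : X → Y → Set X → Set X) (gp : Set T → Set T × Set Y)
    (shad : Set T → Set Y → Y → Y)
    (st : Set T × Set Y × List Y) (V : Set X) : (Set T × Set Y × List Y) × Set X :=
  let U := eng V (st.2.1 ∪ {y | y ∈ st.2.2})
  let w := wit U
  let b := w.2.2
  let yb := shad st.1 st.2.1 b
  let z := if 3 * ε < |f (w.1, b) - f (w.1, yb)| then w.1 else w.2.1
  (((gp (st.1 ∪ {t | e b t ≠ 0})).1, (gp (st.1 ∪ {t | e b t ≠ 0})).2, b :: st.2.2),
    qcG z b U)

/-- state accumulated along a play -/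
noncomputable def namStateOf (e : Y → T → ℝ) (f : X × Y → ℝ) (ε : ℝ)
    (eng : Set X → Set Y → Set X) (wit : Set X → X × X × Y)
    (qcG : X → Y → Set X → Set X) (gp : Set T → Set T × Set Y)
    (shad : Set T → Set Y → Y → Y) (init : Set T × Set Y × List Y) :
    List (Set X) → Set T × Set Y × List Y
  | [] => init
  | V :: l => (namStep e f ε eng wit qcG gp shad
      (namStateOf e f ε eng wit qcG gp shad init l) V).1

/-- the strategy -/
noncomputable def namSigma (e : Y → T → ℝ) (f : X × Y → ℝ) (ε : ℝ)
    (eng : Set X → Set Y → Set X) (wit : Set X → X × X × Y)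
    (qcG : X → Y → Set X → Set X) (gp : Set T → Set T × Set Y)
    (shad : Set T → Set Y → Y → Y) (init : Set T × Set Y × List Y) (W : Set X) :
    List (Set X) → Set X
  | [] => W
  | V :: l => (namStep e f ε eng wit qcG gp shad
      (namStateOf e f ε eng wit qcG gp shad init l) V).2

end Machinery

theorem density_lemma {X Y T : Type*} [TopologicalSpace X] [BaireSpace X]
    [TopologicalSpace Y] [CompactSpace Y] [Nonempty Y] {e : Y → T → ℝ}
    (he : Topology.IsEmbedding e)
    (f : X × Y → ℝ) (hf2 : ∀ x, Continuous fun y => f (x, y))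
    {B : Set Y} (hBd : Dense B)
    (hBsupp : ∀ b ∈ B, {t : T | e b t ≠ 0}.Countable)
    (hBqc : ∀ b ∈ B, QuasiContinuous fun x : X => f (x, b))
    {ε : ℝ} (hε : 0 < ε) :
    Dense {x : X | ∃ U : Set X, IsOpen U ∧ x ∈ U ∧
      ∀ x₁ ∈ U, ∀ x₂ ∈ U, ∀ y : Y, |f (x₁, y) - f (x₂, y)| ≤ ε} := by
  classical
  set ε' : ℝ := ε / 8 with hε'def
  have hε' : 0 < ε' := by positivity
  rw [dense_iff_inter_open]
  intro W hWo hWne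
  by_contra hcon
  rw [Set.not_nonempty_iff_eq_empty] at hcon
  haveI hXne : Nonempty X := ⟨hWne.choose⟩
  obtain ⟨b₀, hb₀⟩ := hBd.nonempty
  have hfail : ∀ U : Set X, IsOpen U → U.Nonempty → U ⊆ W →
      ∃ x₁ ∈ U, ∃ x₂ ∈ U, ∃ b ∈ B, ε < |f (x₁, b) - f (x₂, b)| := by
    intro U hUo hUne hUW
    by_contra h
    push_neg at h
    obtain ⟨x, hx⟩ := hUne
    have hxE : x ∈ W ∩ {x : X | ∃ U : Set X, IsOpen U ∧ x ∈ U ∧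
        ∀ x₁ ∈ U, ∀ x₂ ∈ U, ∀ y : Y, |f (x₁, y) - f (x₂, y)| ≤ ε} := by
      refine ⟨hUW hx, U, hUo, hx, ?_⟩
      intro x₁ h₁ x₂ h₂ y
      have hclosed : IsClosed {y : Y | |f (x₁, y) - f (x₂, y)| ≤ ε} :=
        isClosed_le (((hf2 x₁).sub (hf2 x₂)).abs) continuous_const
      have huniv : (univ : Set Y) ⊆ {y : Y | |f (x₁, y) - f (x₂, y)| ≤ ε} := by
        rw [← hBd.closure_eq]
        exact closure_minimal (fun b hb => h x₁ h₁ x₂ h₂ b hb) hclosed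
      exact huniv (mem_univ y)
    rw [hcon] at hxE
    exact absurd hxE (notMem_empty x)
  -- selectors
  choose eng hEng using fun (V : Set X) (D : Set Y) =>
    engine_lemma he f hf2 hBsupp hBqc hε' V D
  have witEx : ∀ U : Set X, ∃ w : X × X × Y, IsOpen U → U.Nonempty → U ⊆ W →
      (w.1 ∈ U ∧ w.2.1 ∈ U ∧ w.2.2 ∈ B ∧ ε < |f (w.1, w.2.2) - f (w.2.1, w.2.2)|) := by
    intro U
    by_cases h : IsOpen U ∧ U.Nonempty ∧ U ⊆ W
    · obtain ⟨x₁, hx₁, x₂, hx₂, b, hb, hgt⟩ := hfail U h.1 h.2.1 h.2.2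
      exact ⟨(x₁, x₂, b), fun _ _ _ => ⟨hx₁, hx₂, hb, hgt⟩⟩
    · exact ⟨(Classical.arbitrary X, Classical.arbitrary X, b₀),
        fun h1 h2 h3 => absurd ⟨h1, h2, h3⟩ h⟩
  choose wit hWit using witEx
  have qcGEx : ∀ (z : X) (b : Y) (U : Set X), ∃ G : Set X, b ∈ B → IsOpen U → z ∈ U →
      (IsOpen G ∧ G.Nonempty ∧ G ⊆ U ∧ ∀ x ∈ G, |f (x, b) - f (z, b)| < ε') := by
    intro z b U
    by_cases h : b ∈ B ∧ IsOpen U ∧ z ∈ U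
    · obtain ⟨G, hGo, hGne, hGU, hGim⟩ := hBqc b h.1 z U (h.2.1.mem_nhds h.2.2)
        (Metric.ball (f (z, b)) ε') (Metric.ball_mem_nhds _ hε')
      refine ⟨G, fun _ _ _ => ⟨hGo, hGne, hGU, ?_⟩⟩
      intro x hx
      have := hGim ⟨x, hx, rfl⟩
      rwa [Metric.mem_ball, Real.dist_eq] at this
    · exact ⟨∅, fun h1 h2 h3 => absurd ⟨h1, h2, h3⟩ h⟩
  choose qcG hQcG using qcGEx
  have gpEx : ∀ S₀ : Set T, ∃ SM : Set T × Set Y, S₀.Countable →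
      (S₀ ⊆ SM.1 ∧ GoodPair e B SM.1 SM.2) := by
    intro S₀
    by_cases h : S₀.Countable
    · obtain ⟨S, M, h1, h2⟩ := goodPair_exists he hBd hBsupp S₀ h
      exact ⟨(S, M), fun _ => ⟨h1, h2⟩⟩
    · exact ⟨(∅, ∅), fun hc => absurd hc h⟩
  choose gp hGp using gpEx
  have shadEx : ∀ (S : Set T) (M : Set Y) (b : Y), ∃ y' : Y, GoodPair e B S M →
      (y' ∈ closure M ∧ ∀ t, e y' t = if t ∈ S then e b t else 0) := by
    intro S M b
    by_cases h : GoodPair e B S M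
    · obtain ⟨y', h1, h2⟩ := h.2.2.2 b
      exact ⟨y', fun _ => ⟨h1, h2⟩⟩
    · exact ⟨Classical.arbitrary Y, fun hh => absurd hh h⟩
  choose shad hShad using shadEx
  -- strategy
  set init : Set T × Set Y × List Y := ((gp ∅).1, (gp ∅).2, ([] : List Y)) with hinit
  set σ : List (Set X) → Set X := namSigma e f ε' eng wit qcG gp shad init W with hσdef
  set stf : List (Set X) → Set T × Set Y × List Y :=
    namStateOf e f ε' eng wit qcG gp shad init with hstfdef
  have hσcons : ∀ (V : Set X) (l : List (Set X)),
      σ (V :: l) = (namStep e f ε' eng wit qcG gp shad (stf l) V).2 := fun _ _ => rfl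
  have hstcons : ∀ (V : Set X) (l : List (Set X)),
      stf (V :: l) = (namStep e f ε' eng wit qcG gp shad (stf l) V).1 := fun _ _ => rfl
  -- components of a step
  let Uof : (Set T × Set Y × List Y) → Set X → Set X :=
    fun st V => eng V (st.2.1 ∪ {y | y ∈ st.2.2})
  let bof : (Set T × Set Y × List Y) → Set X → Y := fun st V => (wit (Uof st V)).2.2
  let ybof : (Set T × Set Y × List Y) → Set X → Y :=
    fun st V => shad st.1 st.2.1 (bof st V)
  let zof : (Set T × Set Y × List Y) → Set X → X := fun st V =>
    if 3 * ε' < |f ((wit (Uof st V)).1, bof st V) - f ((wit (Uof st V)).1, ybof st V)|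
      then (wit (Uof st V)).1 else (wit (Uof st V)).2.1
  have hstep2 : ∀ st V, (namStep e f ε' eng wit qcG gp shad st V).2
      = qcG (zof st V) (bof st V) (Uof st V) := fun _ _ => rfl
  have hstep1 : ∀ st V, (namStep e f ε' eng wit qcG gp shad st V).1
      = ((gp (st.1 ∪ {t | e (bof st V) t ≠ 0})).1,
         (gp (st.1 ∪ {t | e (bof st V) t ≠ 0})).2, bof st V :: st.2.2) := fun _ _ => rfl
  -- invariants along valid plays
  have hmain : ∀ l : List (Set X), BMValid σ l →
      (GoodPair e B (stf l).1 (stf l).2.1 ∧ (∀ b ∈ (stf l).2.2, b ∈ B)) ∧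
        IsOpen (σ l) ∧ (σ l).Nonempty ∧ σ l ⊆ W ∧
          (∀ (V : Set X) (l' : List (Set X)), l = V :: l' → σ l ⊆ V) := by
    intro l
    induction l with
    | nil =>
      intro _
      refine ⟨⟨(hGp ∅ countable_empty).2, ?_⟩, hWo, hWne, Set.Subset.rfl, ?_⟩
      · intro b hb; exact absurd hb (List.not_mem_nil (a := b))
      · intro V l' h; cases h
    | cons V l ih =>
      intro hv
      obtain ⟨hvl, hVo, hVne, hVsub⟩ := hv
      obtain ⟨⟨hgpI, hlistB⟩, hσo, hσne, hσW, -⟩ := ih hvl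
      have hDc : ((stf l).2.1 ∪ {y | y ∈ (stf l).2.2}).Countable :=
        hgpI.2.1.union ((stf l).2.2.finite_toSet.countable)
      have hDB : ((stf l).2.1 ∪ {y | y ∈ (stf l).2.2}) ⊆ B :=
        union_subset hgpI.2.2.1 (fun y hy => hlistB y hy)
      obtain ⟨hUo, hUne, hUV, hUosc⟩ := hEng V _ hVo hVne hDc hDB
      have hUW : Uof (stf l) V ⊆ W := hUV.trans (hVsub.trans hσW)
      obtain ⟨hw1, hw2, hwb, hwgap⟩ := hWit (Uof (stf l) V) hUo hUne hUW
      have hzU : zof (stf l) V ∈ Uof (stf l) V := by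
        simp only [zof]
        split
        · exact hw1
        · exact hw2
      obtain ⟨hGo, hGne, hGU, -⟩ :=
        hQcG (zof (stf l) V) (bof (stf l) V) (Uof (stf l) V) hwb hUo hzU
      refine ⟨?_, ?_, ?_, ?_, ?_⟩
      · rw [hstcons, hstep1]
        have hseedc : ((stf l).1 ∪ {t | e (bof (stf l) V) t ≠ 0}).Countable :=
          hgpI.1.union (hBsupp _ hwb)
        refine ⟨(hGp _ hseedc).2, ?_⟩
        intro b hb
        rcases List.mem_cons.mp hb with hb | hb
        · rw [hb]; exact hwb
        · exact hlistB b hb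
      · rw [hσcons, hstep2]; exact hGo
      · rw [hσcons, hstep2]; exact hGne
      · rw [hσcons, hstep2]; exact (hGU.trans hUV).trans (hVsub.trans hσW)
      · intro V' l' hEq
        rw [hσcons, hstep2]
        injection hEq with h1 h2
        rw [← h1]
        exact hGU.trans hUV
  have hσspec : ∀ l, BMValid σ l →
      IsOpen (σ l) ∧ (σ l).Nonempty ∧
        ∀ (V : Set X) (l' : List (Set X)), l = V :: l' → σ l ⊆ V := by
    intro l hv
    obtain ⟨-, h1, h2, -, h4⟩ := hmain l hv
    exact ⟨h1, h2, h4⟩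
  obtain ⟨x, p, hp0, hpvalid, hpsucc, hpx⟩ := BM_lemma σ hσspec
  choose Vn hVn using hpsucc
  -- stage data
  let stn : ℕ → Set T × Set Y × List Y := fun n => stf (p n)
  let Un : ℕ → Set X := fun n => Uof (stn n) (Vn n)
  let bn : ℕ → Y := fun n => bof (stn n) (Vn n)
  let yn : ℕ → Y := fun n => ybof (stn n) (Vn n)
  let zn : ℕ → X := fun n => zof (stn n) (Vn n)
  have hfacts : ∀ n : ℕ,
      (zn n ∈ Un n) ∧
      (∀ x₁ ∈ Un n, ∀ x₂ ∈ Un n, ∀ y ∈ closure ((stn n).2.1 ∪ {y | y ∈ (stn n).2.2}),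
        |f (x₁, y) - f (x₂, y)| ≤ ε') ∧
      (ε < |f ((wit (Un n)).1, bn n) - f ((wit (Un n)).2.1, bn n)|) ∧
      ((wit (Un n)).1 ∈ Un n) ∧
      ((wit (Un n)).2.1 ∈ Un n) ∧
      (yn n ∈ closure ((stn n).2.1)) ∧
      (∀ t, e (yn n) t = if t ∈ (stn n).1 then e (bn n) t else 0) ∧
      (∀ x' ∈ qcG (zn n) (bn n) (Un n), |f (x', bn n) - f (zn n, bn n)| < ε') ∧
      (qcG (zn n) (bn n) (Un n) ⊆ Un n) ∧
      (((stn n).1 ∪ {t | e (bn n) t ≠ 0}) ⊆ (stn (n + 1)).1) ∧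
      (x ∈ qcG (zn n) (bn n) (Un n)) := by
    intro n
    have hv := hpvalid (n + 1)
    rw [hVn n] at hv
    obtain ⟨hvl, hVo, hVne, hVsub⟩ := hv
    obtain ⟨⟨hgpI, hlistB⟩, hσo2, hσne2, hσW, -⟩ := hmain (p n) hvl
    have hDc : ((stn n).2.1 ∪ {y | y ∈ (stn n).2.2}).Countable :=
      hgpI.2.1.union ((stn n).2.2.finite_toSet.countable)
    have hDB : ((stn n).2.1 ∪ {y | y ∈ (stn n).2.2}) ⊆ B :=
      union_subset hgpI.2.2.1 (fun y hy => hlistB y hy)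
    obtain ⟨hUo, hUne, hUV, hUosc⟩ := hEng (Vn n) _ hVo hVne hDc hDB
    have hUW : Un n ⊆ W := hUV.trans (hVsub.trans hσW)
    obtain ⟨hw1, hw2, hwb, hwgap⟩ := hWit (Un n) hUo hUne hUW
    have hzU : zn n ∈ Un n := by
      simp only [zn, zof]
      split
      · exact hw1
      · exact hw2
    obtain ⟨hGo, hGne, hGU, hGval⟩ := hQcG (zn n) (bn n) (Un n) hwb hUo hzU
    obtain ⟨hsh1, hsh2⟩ := hShad (stn n).1 (stn n).2.1 (bn n) hgpI
    have hseedc : ((stn n).1 ∪ {t | e (bn n) t ≠ 0}).Countable :=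
      hgpI.1.union (hBsupp _ hwb)
    have hseed : ((stn n).1 ∪ {t | e (bn n) t ≠ 0}) ⊆ (stn (n + 1)).1 := by
      show _ ⊆ (stf (p (n + 1))).1
      rw [hVn n, hstcons, hstep1]
      exact (hGp _ hseedc).1
    have hxmem : x ∈ qcG (zn n) (bn n) (Un n) := by
      have hx := hpx (n + 1)
      rw [hVn n, hσcons, hstep2] at hx
      exact hx
    exact ⟨hzU, hUosc, hwgap, hw1, hw2, hsh1, hsh2, hGval, hGU, hseed, hxmem⟩
  -- gap at z
  have hyncl : ∀ n, yn n ∈ closure ((stn n).2.1 ∪ {y | y ∈ (stn n).2.2}) :=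
    fun n => closure_mono subset_union_left (hfacts n).2.2.2.2.2.1
  have hzgap : ∀ n, 3 * ε' < |f (zn n, bn n) - f (zn n, yn n)| := by
    intro n
    obtain ⟨hzU, hosc, hgap, hw1, hw2, -, -, -, -, -, -⟩ := hfacts n
    by_cases hzc : 3 * ε' <
        |f ((wit (Un n)).1, bn n) - f ((wit (Un n)).1, yn n)|
    · have hzeq : zn n = (wit (Un n)).1 := by
        exact if_pos hzc
      rw [hzeq]; exact hzc
    · have hzeq : zn n = (wit (Un n)).2.1 := by
        exact if_neg hzc
      rw [hzeq]
      push_neg at hzc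
      have h1 : |f ((wit (Un n)).1, yn n) - f ((wit (Un n)).2.1, yn n)| ≤ ε' :=
        hosc _ hw1 _ hw2 _ (hyncl n)
      have htri : |f ((wit (Un n)).1, bn n) - f ((wit (Un n)).2.1, bn n)| ≤
          |f ((wit (Un n)).1, bn n) - f ((wit (Un n)).1, yn n)| +
          |f ((wit (Un n)).1, yn n) - f ((wit (Un n)).2.1, yn n)| +
          |f ((wit (Un n)).2.1, bn n) - f ((wit (Un n)).2.1, yn n)| := by
        set a1 := f ((wit (Un n)).1, bn n)
        set a2 := f ((wit (Un n)).2.1, bn n)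
        set c1 := f ((wit (Un n)).1, yn n)
        set c2 := f ((wit (Un n)).2.1, yn n)
        have heq : a1 - a2 = ((a1 - c1) + (c1 - c2)) - (a2 - c2) := by ring
        rw [heq]
        have t1 : |((a1 - c1) + (c1 - c2)) - (a2 - c2)|
            ≤ |(a1 - c1) + (c1 - c2)| + |a2 - c2| := abs_sub _ _
        have t2 : |(a1 - c1) + (c1 - c2)| ≤ |a1 - c1| + |c1 - c2| := abs_add_le _ _
        linarith
      have hε8 : ε = 8 * ε' := by rw [hε'def]; ring
      rw [hε8] at hgap
      linarith
  -- gap at x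
  have hxU : ∀ n, x ∈ Un n := fun n => (hfacts n).2.2.2.2.2.2.2.2.1 (hfacts n).2.2.2.2.2.2.2.2.2.2
  have hxgap : ∀ n, ε' < |f (x, bn n) - f (x, yn n)| := by
    intro n
    obtain ⟨hzU, hosc, -, -, -, -, -, hqcval, hGsub, -, hxmem⟩ := hfacts n
    have h1 : |f (x, bn n) - f (zn n, bn n)| < ε' := hqcval x hxmem
    have h2 : |f (x, yn n) - f (zn n, yn n)| ≤ ε' := hosc _ (hGsub hxmem) _ hzU _ (hyncl n)
    have h3 := hzgap n
    have htri : |f (zn n, bn n) - f (zn n, yn n)| ≤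
        |f (x, bn n) - f (zn n, bn n)| + |f (x, bn n) - f (x, yn n)|
          + |f (x, yn n) - f (zn n, yn n)| := by
      set a1 := f (x, bn n)
      set a2 := f (zn n, bn n)
      set c1 := f (x, yn n)
      set c2 := f (zn n, yn n)
      have heq : a2 - c2 = (-(a1 - a2) + (a1 - c1)) + (c1 - c2) := by ring
      rw [heq]
      have t1 : |(-(a1 - a2) + (a1 - c1)) + (c1 - c2)|
          ≤ |(-(a1 - a2)) + (a1 - c1)| + |c1 - c2| := abs_add_le _ _
      have t2 : |(-(a1 - a2)) + (a1 - c1)| ≤ |(-(a1 - a2))| + |a1 - c1| := abs_add_le _ _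
      rw [abs_neg] at t2
      linarith
    linarith
  -- uniform continuity at x
  obtain ⟨F, δ, hδpos, hFδ⟩ := uniform_approx he (fun y => f (x, y)) (hf2 x) hε'
  have htn : ∀ n, ∃ t ∈ F, δ ≤ |e (bn n) t - e (yn n) t| := by
    intro n
    by_contra h
    push_neg at h
    have := hFδ (bn n) (yn n) h
    linarith [hxgap n]
  choose tn htnF htnδ using htn
  have htnS : ∀ n, tn n ∉ (stn n).1 ∧ e (bn n) (tn n) ≠ 0 := by
    intro n
    have hcoord := (hfacts n).2.2.2.2.2.2.1 (tn n)
    by_cases hmem : tn n ∈ (stn n).1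
    · exfalso
      rw [if_pos hmem] at hcoord
      have h0 : |e (bn n) (tn n) - e (yn n) (tn n)| = 0 := by
        rw [hcoord]; simp
      have := htnδ n
      rw [h0] at this
      linarith
    · refine ⟨hmem, ?_⟩
      rw [if_neg hmem] at hcoord
      intro h0
      have hz : |e (bn n) (tn n) - e (yn n) (tn n)| = 0 := by
        rw [hcoord, h0]; simp
      have := htnδ n
      rw [hz] at this
      linarith
  have hSstep : ∀ n, (stn n).1 ⊆ (stn (n + 1)).1 :=
    fun n => subset_union_left.trans (hfacts n).2.2.2.2.2.2.2.2.2.1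
  have hSmono : ∀ n m, n ≤ m → (stn n).1 ⊆ (stn m).1 := by
    intro n m hnm
    induction m with
    | zero => rw [Nat.le_zero] at hnm; subst hnm; exact Set.Subset.rfl
    | succ m ih =>
      rcases Nat.lt_or_ge n (m + 1) with h | h
      · exact (ih (Nat.lt_succ_iff.mp h)).trans (hSstep m)
      · have : n = m + 1 := le_antisymm hnm h
        subst this; exact Set.Subset.rfl
  have hkey : ∀ a b : ℕ, a < b → tn a ≠ tn b := by
    intro a b hab heq
    have h1 : tn a ∈ (stn (a + 1)).1 :=
      (hfacts a).2.2.2.2.2.2.2.2.2.1 (Set.mem_union_right _ (htnS a).2)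
    have h2 : tn a ∈ (stn b).1 := hSmono (a + 1) b hab h1
    rw [heq] at h2
    exact (htnS b).1 h2
  obtain ⟨n, m, hnm, hemq⟩ :=
    Finite.exists_ne_map_eq_of_infinite (fun n : ℕ => (⟨tn n, htnF n⟩ : {t // t ∈ F}))
  have heq' : tn n = tn m := congrArg Subtype.val hemq
  rcases Nat.lt_or_ge n m with h | h
  · exact hkey n m h heq'
  · exact hkey m n (lt_of_le_of_ne h (Ne.symm hnm)) heq'.symm

/-- Corollary 3.4: if `Y` is a Valdivia compact and `f : X × Y → ℝ` is
continuous in the second variable with quasi-continuous sections `f_b` for `b` in a dense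
`Gδ` set `B₁`, then `f` has the Namioka property. -/
theorem namioka_of_valdivia_tilde {X Y T : Type*} [TopologicalSpace X] [BaireSpace X]
    [TopologicalSpace Y] [CompactSpace Y]
    (e : Y → (T → ℝ)) (he : Topology.IsEmbedding e)
    (hcube : ∀ y t, e y t ∈ Set.Icc (0 : ℝ) 1)
    (hsigma : Dense {y : Y | {t : T | e y t ≠ 0}.Countable})
    (f : X × Y → ℝ)
    (hf2 : ∀ x : X, Continuous fun y => f (x, y))
    (B₁ : Set Y) (hBdense : Dense B₁) (hBGδ : IsGδ B₁)
    (hBqc : ∀ b ∈ B₁, QuasiContinuous fun x : X => f (x, b)) :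
    NamiokaProperty f := by
  classical
  rcases isEmpty_or_nonempty Y with hY | hY
  · exact ⟨Set.univ, dense_univ, IsGδ.univ, fun x _ y => (hY.elim y)⟩
  set B : Set Y := B₁ ∩ {y : Y | {t : T | e y t ≠ 0}.Countable} with hBdef
  have hBd : Dense B := dense_inter_sigma he hsigma hBdense hBGδ
  have hBsupp : ∀ b ∈ B, {t : T | e b t ≠ 0}.Countable := fun b hb => hb.2
  have hBqc' : ∀ b ∈ B, QuasiContinuous fun x : X => f (x, b) := fun b hb => hBqc b hb.1
  let E : ℕ → Set X := fun n => {x : X | ∃ U : Set X, IsOpen U ∧ x ∈ U ∧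
    ∀ x₁ ∈ U, ∀ x₂ ∈ U, ∀ y : Y, |f (x₁, y) - f (x₂, y)| ≤ 1 / (n + 1)}
  have hEopen : ∀ n, IsOpen (E n) := by
    intro n
    rw [isOpen_iff_mem_nhds]
    rintro x ⟨U, hUo, hxU, hUosc⟩
    exact Filter.mem_of_superset (hUo.mem_nhds hxU) (fun x' hx' => ⟨U, hUo, hx', hUosc⟩)
  have hEdense : ∀ n, Dense (E n) := by
    intro n
    exact density_lemma he f hf2 hBd hBsupp hBqc'
      (by positivity : (0 : ℝ) < 1 / (n + 1))
  refine ⟨⋂ n, E n, dense_iInter_of_isOpen hEopen hEdense,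
    IsGδ.iInter (fun n => (hEopen n).isGδ), ?_⟩
  intro x hx y
  rw [ContinuousAt, Metric.tendsto_nhds]
  intro η hη
  obtain ⟨n, hn⟩ := exists_nat_one_div_lt (half_pos hη)
  obtain ⟨U, hUo, hxU, hUosc⟩ := Set.mem_iInter.mp hx n
  have hVmem : (fun y' : Y => f (x, y')) ⁻¹' Metric.ball (f (x, y)) (η / 2) ∈ 𝓝 y := by
    refine (Metric.isOpen_ball.preimage (hf2 x)).mem_nhds ?_
    exact Metric.mem_ball_self (by linarith)
  have hprod := prod_mem_nhds (hUo.mem_nhds hxU) hVmem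
  filter_upwards [hprod] with q hq
  obtain ⟨hq1, hq2⟩ := hq
  have h1 : |f (q.1, q.2) - f (x, q.2)| ≤ 1 / (n + 1) := hUosc q.1 hq1 x hxU q.2
  have h2 : |f (x, q.2) - f (x, y)| < η / 2 := by
    have := hq2
    rw [Set.mem_preimage, Metric.mem_ball, Real.dist_eq] at this
    exact this
  rw [Real.dist_eq]
  have heqq : f q = f (q.1, q.2) := rfl
  rw [heqq]
  have htri : |f (q.1, q.2) - f (x, y)|
      ≤ |f (q.1, q.2) - f (x, q.2)| + |f (x, q.2) - f (x, y)| := by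
    have heq2 : f (q.1, q.2) - f (x, y)
        = (f (q.1, q.2) - f (x, q.2)) + (f (x, q.2) - f (x, y)) := by ring
    rw [heq2]
    exact abs_add_le _ _
  calc |f (q.1, q.2) - f (x, y)|
      ≤ |f (q.1, q.2) - f (x, q.2)| + |f (x, q.2) - f (x, y)| := htri
    _ < 1 / (n + 1) + η / 2 := by linarith
    _ < η / 2 + η / 2 := by linarith
    _ = η := by ring
end

section
/- Every Valdivia compact space is a Kempisty space: if Y is a Valdivia compact, X is a Baire space, and f : X × Y → ℝ is quasi-continuous in the first variable and continuous in the second variable, then f has the Namioka property. -/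
open Topology

set_option linter.unusedSectionVars false
set_option linter.unnecessarySimpa false
set_option linter.unusedTactic false
set_option linter.unreachableTactic false
set_option linter.unnecessarySeqFocus false
namespace ValdiviaKempisty

variable {X Y T : Type*} [TopologicalSpace Y] [CompactSpace Y]

/-- basic distance-like function from an enumeration of coordinates -/
noncomputable def dd (e : Y → T → ℝ) (σ : ℕ → Option T) (u v : Y) : ℝ :=
  ∑' i, (1/2 : ℝ) ^ i * Option.elim (σ i) 0 (fun t => |e u t - e v t|)

section dd

variable {e : Y → T → ℝ} {σ : ℕ → Option T}

lemma term_nonneg (u v : Y) (i : ℕ) :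
    0 ≤ (1/2 : ℝ) ^ i * Option.elim (σ i) 0 (fun t => |e u t - e v t|) := by
  apply mul_nonneg (by positivity)
  cases σ i with
  | none => simp
  | some t => simpa using abs_nonneg _

lemma term_le (hcube : ∀ y t, e y t ∈ Set.Icc (0:ℝ) 1) (u v : Y) (i : ℕ) :
    (1/2 : ℝ) ^ i * Option.elim (σ i) 0 (fun t => |e u t - e v t|) ≤ (1/2 : ℝ) ^ i := by
  have h : Option.elim (σ i) 0 (fun t => |e u t - e v t|) ≤ 1 := by
    cases σ i with
    | none => simp
    | some t =>
      have h1 := hcube u t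
      have h2 := hcube v t
      simp only [Set.mem_Icc] at h1 h2
      simp only [Option.elim]
      rw [abs_le]
      constructor <;> linarith
  calc (1/2 : ℝ) ^ i * Option.elim (σ i) 0 (fun t => |e u t - e v t|)
      ≤ (1/2 : ℝ) ^ i * 1 := by
        apply mul_le_mul_of_nonneg_left h (by positivity)
    _ = (1/2 : ℝ) ^ i := mul_one _

lemma summable_dd (hcube : ∀ y t, e y t ∈ Set.Icc (0:ℝ) 1) (u v : Y) :
    Summable (fun i => (1/2 : ℝ) ^ i * Option.elim (σ i) 0 (fun t => |e u t - e v t|)) :=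
  Summable.of_nonneg_of_le (term_nonneg u v) (term_le hcube u v) summable_geometric_two

lemma dd_nonneg (u v : Y) : 0 ≤ dd e σ u v :=
  tsum_nonneg (term_nonneg u v)

lemma dd_self (u : Y) : dd e σ u u = 0 := by
  unfold dd
  convert tsum_zero with i
  cases σ i <;> simp

lemma dd_comm (u v : Y) : dd e σ u v = dd e σ v u := by
  unfold dd
  congr 1; funext i
  cases σ i <;> simp [abs_sub_comm]

lemma dd_triangle (hcube : ∀ y t, e y t ∈ Set.Icc (0:ℝ) 1) (u v w : Y) :
    dd e σ u w ≤ dd e σ u v + dd e σ v w := by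
  unfold dd
  rw [← Summable.tsum_add (summable_dd hcube u v) (summable_dd hcube v w)]
  apply Summable.tsum_le_tsum _ (summable_dd hcube u w)
    ((summable_dd hcube u v).add (summable_dd hcube v w))
  intro i
  rw [← mul_add]
  apply mul_le_mul_of_nonneg_left _ (by positivity)
  cases σ i with
  | none => simp
  | some t =>
    simpa using abs_sub_le (e u t) (e v t) (e w t)

lemma continuous_dd (he : Continuous e) (hcube : ∀ y t, e y t ∈ Set.Icc (0:ℝ) 1) :
    Continuous (fun p : Y × Y => dd e σ p.1 p.2) := by
  apply continuous_tsum
  · intro i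
    cases h : σ i with
    | none => simpa [h] using continuous_const
    | some t =>
      simp only [h, Option.elim]
      have h1 : Continuous fun p : Y × Y => e p.1 t :=
        ((continuous_apply t).comp he).comp continuous_fst
      have h2 : Continuous fun p : Y × Y => e p.2 t :=
        ((continuous_apply t).comp he).comp continuous_snd
      exact continuous_const.mul ((h1.sub h2).abs)
  · exact summable_geometric_two
  · intro i p
    rw [Real.norm_eq_abs, abs_of_nonneg (term_nonneg p.1 p.2 i)]
    exact term_le hcube p.1 p.2 i

/-- single coordinate bound from dd -/
lemma coord_le_dd (hcube : ∀ y t, e y t ∈ Set.Icc (0:ℝ) 1) (u v : Y) (i : ℕ) (t : T)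
    (ht : σ i = some t) :
    (1/2 : ℝ) ^ i * |e u t - e v t| ≤ dd e σ u v := by
  have := Summable.le_tsum (summable_dd (σ := σ) hcube u v) i (fun j _ => term_nonneg u v j)
  rwa [ht] at this

/-- if all terms up to N vanish, dd is at most the geometric tail -/
lemma dd_le_of_eq_on (hcube : ∀ y t, e y t ∈ Set.Icc (0:ℝ) 1) (u v : Y) (N : ℕ)
    (h : ∀ i < N, ∀ t, σ i = some t → e u t = e v t) :
    dd e σ u v ≤ 2 * (1/2 : ℝ) ^ N := by
  unfold dd
  rw [← Summable.sum_add_tsum_nat_add N (summable_dd hcube u v)]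
  have h1 : (∑ i ∈ Finset.range N,
      (1/2 : ℝ) ^ i * Option.elim (σ i) 0 (fun t => |e u t - e v t|)) = 0 := by
    apply Finset.sum_eq_zero
    intro i hi
    rw [Finset.mem_range] at hi
    cases hσ : σ i with
    | none => simp
    | some t => simp [Option.elim, h i hi t hσ]
  rw [h1, zero_add]
  have h2 : ∀ i : ℕ, (1/2 : ℝ) ^ (i + N) *
      Option.elim (σ (i + N)) 0 (fun t => |e u t - e v t|) ≤ (1/2 : ℝ) ^ i * (1/2 : ℝ) ^ N := by
    intro i
    rw [← pow_add]
    exact term_le hcube u v (i + N)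
  calc (∑' i, (1/2 : ℝ) ^ (i + N) *
        Option.elim (σ (i + N)) 0 (fun t => |e u t - e v t|))
      ≤ ∑' i : ℕ, (1/2 : ℝ) ^ i * (1/2 : ℝ) ^ N := by
        apply Summable.tsum_le_tsum h2 ((summable_dd hcube u v).comp_injective (add_left_injective N))
        exact summable_geometric_two.mul_right _
    _ = 2 * (1/2 : ℝ) ^ N := by rw [tsum_mul_right, tsum_geometric_two]

end dd

section chunk2

variable {X Y T : Type*} [TopologicalSpace Y] [CompactSpace Y]
variable {e : Y → T → ℝ} {σ : ℕ → Option T}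

/-- the set of points supported inside S -/
def Kset (e : Y → T → ℝ) (S : Set T) : Set Y := {z : Y | ∀ t, t ∉ S → e z t = 0}

lemma isClosed_Kset (hec : Continuous e) (S : Set T) : IsClosed (Kset e S) := by
  have : Kset e S = ⋂ (t : T) (_ : t ∉ S), {z : Y | e z t = 0} := by
    ext z; simp [Kset]
  rw [this]
  refine isClosed_iInter fun t => isClosed_iInter fun _ => ?_
  exact isClosed_eq ((continuous_apply t).comp hec) continuous_const

lemma eq_of_dd_eq_zero (he : Topology.IsEmbedding e)
    (hcube : ∀ y t, e y t ∈ Set.Icc (0:ℝ) 1)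
    {S : Set T} (hσ : ∀ t ∈ S, ∃ n, σ n = some t)
    {u v : Y} (hu : u ∈ Kset e S) (hv : v ∈ Kset e S)
    (h : dd e σ u v = 0) : u = v := by
  apply he.injective
  funext t
  by_cases ht : t ∈ S
  · obtain ⟨n, hn⟩ := hσ t ht
    have h1 := coord_le_dd (σ := σ) hcube u v n t hn
    rw [h] at h1
    have h2 : (0:ℝ) ≤ (1/2 : ℝ) ^ n * |e u t - e v t| := by positivity
    have h3 : (1/2 : ℝ) ^ n * |e u t - e v t| = 0 := le_antisymm h1 h2
    have h4 : |e u t - e v t| = 0 := by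
      rcases mul_eq_zero.1 h3 with h | h
      · exact absurd h (by positivity)
      · exact h
    have := abs_eq_zero.1 h4
    linarith
  · rw [hu t ht, hv t ht]

lemma exists_net (hec : Continuous e) (hcube : ∀ y t, e y t ∈ Set.Icc (0:ℝ) 1)
    (K : Set Y) (hK : IsCompact K) (r : ℝ) (hr : 0 < r) :
    ∃ N : Set Y, N.Finite ∧ N ⊆ K ∧ ∀ v ∈ K, ∃ u ∈ N, dd e σ u v < r := by
  have hopen : ∀ u : Y, IsOpen {v : Y | dd e σ u v < r} := by
    intro u
    have hc : Continuous (fun v : Y => dd e σ u v) :=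
      (continuous_dd hec hcube).comp (continuous_const.prodMk continuous_id)
    exact isOpen_lt hc continuous_const
  have hcover : K ⊆ ⋃ u ∈ K, {v : Y | dd e σ u v < r} := by
    intro v hv
    simp only [Set.mem_iUnion]
    exact ⟨v, hv, by simpa [dd_self] using hr⟩
  obtain ⟨N, hNK, hNfin, hNcov⟩ :=
    hK.elim_finite_subcover_image (fun u _ => hopen u) hcover
  refine ⟨N, hNfin, hNK, fun v hv => ?_⟩
  have := hNcov hv
  simpa only [Set.mem_iUnion, Set.mem_setOf_eq, exists_prop] using this

lemma uniform_cont (he : Topology.IsEmbedding e)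
    (hcube : ∀ y t, e y t ∈ Set.Icc (0:ℝ) 1)
    {S : Set T} (hσ : ∀ t ∈ S, ∃ n, σ n = some t)
    (g : Y → ℝ) (hg : Continuous g) {ε' : ℝ} (hε' : 0 < ε') :
    ∃ k : ℕ, ∀ u ∈ Kset e S, ∀ v ∈ Kset e S,
      dd e σ u v ≤ 1/(k+1) → |g u - g v| ≤ ε' := by
  by_contra hcon
  push_neg at hcon
  set C : ℕ → Set (Y × Y) := fun m =>
    {p : Y × Y | p.1 ∈ Kset e S ∧ p.2 ∈ Kset e S ∧ dd e σ p.1 p.2 ≤ 1/(m+1) ∧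
      ε' ≤ |g p.1 - g p.2|} with hC
  have hdd : Continuous (fun p : Y × Y => dd e σ p.1 p.2) :=
    continuous_dd he.continuous hcube
  have hclosed : ∀ m, IsClosed (C m) := by
    intro m
    apply IsClosed.inter
    · exact (isClosed_Kset he.continuous S).preimage continuous_fst
    apply IsClosed.inter
    · exact (isClosed_Kset he.continuous S).preimage continuous_snd
    apply IsClosed.inter
    · exact isClosed_le hdd continuous_const
    · exact isClosed_le continuous_const
        (((hg.comp continuous_fst).sub (hg.comp continuous_snd)).abs)
  have hne : ∀ m, (C m).Nonempty := by
    intro m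
    obtain ⟨u, hu, v, hv, hd, hgap⟩ := hcon m
    exact ⟨(u, v), hu, hv, hd, hgap.le⟩
  have hdir : Directed (· ⊇ ·) C := by
    intro m n
    refine ⟨max m n, ?_, ?_⟩ <;>
    · intro p hp
      obtain ⟨h1, h2, h3, h4⟩ := hp
      refine ⟨h1, h2, le_trans h3 ?_, h4⟩
      apply one_div_le_one_div_of_le (by positivity)
      push_cast
      simp [le_max_iff]
  obtain ⟨p, hp⟩ := IsCompact.nonempty_iInter_of_directed_nonempty_isCompact_isClosed
    C hdir hne (fun m => (hclosed m).isCompact) hclosed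
  simp only [Set.mem_iInter] at hp
  obtain ⟨h1, h2, _, h4⟩ := hp 0
  have hzero : dd e σ p.1 p.2 = 0 := by
    have hle : ∀ m : ℕ, dd e σ p.1 p.2 ≤ 1/(m+1) := fun m => (hp m).2.2.1
    have hge := dd_nonneg (e := e) (σ := σ) p.1 p.2
    by_contra hne0
    have hpos : 0 < dd e σ p.1 p.2 := lt_of_le_of_ne hge (Ne.symm hne0)
    obtain ⟨m, hm⟩ := exists_nat_one_div_lt hpos
    exact absurd (hle m) (by push_cast at hm ⊢; linarith)
  have := eq_of_dd_eq_zero he hcube hσ h1 h2 hzero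
  rw [this] at h4
  simp at h4
  linarith

end chunk2

section chunk3

variable {X Y T : Type*} [TopologicalSpace X] [BaireSpace X]
  [TopologicalSpace Y] [CompactSpace Y]
variable {e : Y → T → ℝ} {σ : ℕ → Option T}

lemma exists_sigma {S : Set T} (hS : S.Countable) :
    ∃ σ : ℕ → Option T, ∀ t ∈ S, ∃ n, σ n = some t := by
  haveI := hS.toEncodable
  refine ⟨fun n => (Encodable.decode (α := ↥S) n).map Subtype.val, fun t ht => ?_⟩
  exact ⟨Encodable.encode (⟨t, ht⟩ : ↥S), by simp⟩

/-- Key Baire category lemma: on some nonempty open subset of any nonempty open set,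
the function is uniformly flat in the first variable over the compact set `Kset e S`. -/
lemma flat_lemma (he : Topology.IsEmbedding e)
    (hcube : ∀ y t, e y t ∈ Set.Icc (0:ℝ) 1)
    (f : X × Y → ℝ)
    (hf1 : ∀ y : Y, QuasiContinuous fun x : X => f (x, y))
    (hf2 : ∀ x : X, Continuous fun y => f (x, y))
    {S : Set T} (hσ : ∀ t ∈ S, ∃ n, σ n = some t)
    {ε' : ℝ} (hε' : 0 < ε') {U : Set X} (hU : IsOpen U) (hUne : U.Nonempty) :
    ∃ V : Set X, IsOpen V ∧ V.Nonempty ∧ V ⊆ U ∧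
      ∀ x ∈ V, ∀ x' ∈ V, ∀ w ∈ Kset e S, |f (x, w) - f (x', w)| ≤ ε' := by
  classical
  set K := Kset e S with hK
  have hKcl : IsClosed K := isClosed_Kset he.continuous S
  have hKc : IsCompact K := hKcl.isCompact
  -- nets
  have hnets : ∀ k : ℕ, ∃ N : Set Y, N.Finite ∧ N ⊆ K ∧
      ∀ v ∈ K, ∃ u ∈ N, dd e σ u v < 1/(k+1) :=
    fun k => exists_net he.continuous hcube K hKc (1/(k+1)) (by positivity)
  choose N hNfin hNsub hNcov using hnets
  haveI : ∀ k, Finite ↥(N k) := fun k => (hNfin k).to_subtype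
  -- countable index
  set ι := Σ k : ℕ, (↥(N k) → ℤ) with hι
  haveI : Countable ι := by infer_instance
  set E : ι → Set X := fun i =>
    {x | x ∈ U ∧
      (∀ u ∈ K, ∀ v ∈ K, dd e σ u v ≤ 1/(i.1+1) → |f (x, u) - f (x, v)| ≤ ε'/4) ∧
      (∀ u : ↥(N i.1), (i.2 u : ℝ) * (ε'/4) ≤ f (x, (u : Y)) ∧
        f (x, (u : Y)) ≤ ((i.2 u : ℝ) + 1) * (ε'/4))} with hE
  -- covering
  have hcover : U ⊆ ⋃ i, E i := by
    intro x hx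
    obtain ⟨k, hk⟩ := uniform_cont (σ := σ) he hcube hσ
      (fun y => f (x, y)) (hf2 x) (by positivity : (0:ℝ) < ε'/4)
    refine Set.mem_iUnion.2 ⟨⟨k, fun u => ⌊f (x, (u : Y)) / (ε'/4)⌋⟩, hx, hk, fun u => ?_⟩
    have h4 : (0:ℝ) < ε'/4 := by positivity
    constructor
    · have := Int.floor_le (f (x, (u : Y)) / (ε'/4))
      calc (⌊f (x, (u : Y)) / (ε'/4)⌋ : ℝ) * (ε'/4)
          ≤ (f (x, (u : Y)) / (ε'/4)) * (ε'/4) := by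
            apply mul_le_mul_of_nonneg_right this h4.le
        _ = f (x, (u : Y)) := by field_simp
    · have := (Int.lt_floor_add_one (f (x, (u : Y)) / (ε'/4))).le
      calc f (x, (u : Y)) = (f (x, (u : Y)) / (ε'/4)) * (ε'/4) := by field_simp
        _ ≤ ((⌊f (x, (u : Y)) / (ε'/4)⌋ : ℝ) + 1) * (ε'/4) := by
            apply mul_le_mul_of_nonneg_right _ h4.le
            exact_mod_cast this
  -- Baire
  set D : ι → Set X := fun i => interior (closure (E i)) ∪ (closure (E i))ᶜ with hD
  have hDopen : ∀ i, IsOpen (D i) := fun i =>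
    isOpen_interior.union (isClosed_closure).isOpen_compl
  have hDdense : ∀ i, Dense (D i) := by
    intro i
    rw [dense_iff_inter_open]
    intro O hO hOne
    by_cases hsub : O ⊆ closure (E i)
    · obtain ⟨x, hx⟩ := hOne
      exact ⟨x, hx, Or.inl (interior_maximal hsub hO hx)⟩
    · rw [Set.not_subset] at hsub
      obtain ⟨x, hxO, hxn⟩ := hsub
      exact ⟨x, hxO, Or.inr hxn⟩
  have hdense : Dense (⋂ i, D i) := dense_iInter_of_isOpen hDopen hDdense
  obtain ⟨x₀, hx₀U, hx₀D⟩ := hdense.inter_open_nonempty U hU hUne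
  obtain ⟨i₀, hi₀⟩ := Set.mem_iUnion.1 (hcover hx₀U)
  have hx₀cl : x₀ ∈ closure (E i₀) := subset_closure hi₀
  have hx₀int : x₀ ∈ interior (closure (E i₀)) := by
    have := Set.mem_iInter.1 hx₀D i₀
    rcases this with h | h
    · exact h
    · exact absurd hx₀cl h
  refine ⟨interior (closure (E i₀)) ∩ U, isOpen_interior.inter hU,
    ⟨x₀, hx₀int, hx₀U⟩, Set.inter_subset_right, ?_⟩
  set V := interior (closure (E i₀)) ∩ U with hV
  have hVopen : IsOpen V := isOpen_interior.inter hU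
  -- E is dense in V
  have hEdense : ∀ G : Set X, IsOpen G → G.Nonempty → G ⊆ V → (G ∩ E i₀).Nonempty := by
    intro G hG hGne hGV
    obtain ⟨x, hx⟩ := hGne
    have hxcl : x ∈ closure (E i₀) := interior_subset (hGV hx).1
    rw [mem_closure_iff] at hxcl
    exact hxcl G hG hx
  -- pairs in E are flat
  have hEpair : ∀ z ∈ E i₀, ∀ z' ∈ E i₀, ∀ w ∈ K,
      |f (z, w) - f (z', w)| ≤ 3 * (ε'/4) := by
    intro z hz z' hz' w hw
    obtain ⟨u, hu, hudd⟩ := hNcov i₀.1 w hw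
    have huK : u ∈ K := hNsub i₀.1 hu
    have h1 := hz.2.1 u huK w hw hudd.le
    have h2 := hz'.2.1 u huK w hw hudd.le
    have h3 := hz.2.2 ⟨u, hu⟩
    have h4 := hz'.2.2 ⟨u, hu⟩
    simp only at h3 h4
    have : |f (z, (u:Y)) - f (z', (u:Y))| ≤ ε'/4 := by
      rw [abs_le]; constructor <;> nlinarith [h3.1, h3.2, h4.1, h4.2]
    calc |f (z, w) - f (z', w)|
        ≤ |f (z, w) - f (z, u)| + |f (z, u) - f (z', u)| + |f (z', u) - f (z', w)| := by
          have := abs_sub_le (f (z,w)) (f (z,u)) (f (z',u))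
          have := abs_sub_le (f (z,w)) (f (z',u)) (f (z',w))
          linarith [abs_sub_le (f (z,w)) (f (z,u)) (f (z',u)),
            abs_sub_le (f (z,w)) (f (z',u)) (f (z',w))]
      _ ≤ ε'/4 + ε'/4 + ε'/4 := by
          gcongr <;> first | exact this | exact h2 |
            (rw [abs_sub_comm]; first | exact h1 | exact h2)
      _ = 3 * (ε'/4) := by ring
  -- from V to E via quasicontinuity
  have hVE : ∀ x ∈ V, ∀ w ∈ K, ∃ z ∈ E i₀, |f (x, w) - f (z, w)| ≤ ε'/8 := by
    intro x hx w _
    have hQC := hf1 w x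
    obtain ⟨G, hGopen, hGne, hGsub, hGim⟩ := hQC V (hVopen.mem_nhds hx)
      (Metric.ball (f (x, w)) (ε'/8)) (Metric.ball_mem_nhds _ (by positivity))
    obtain ⟨z, hzG, hzE⟩ := hEdense G hGopen hGne hGsub
    refine ⟨z, hzE, ?_⟩
    have : f (z, w) ∈ Metric.ball (f (x, w)) (ε'/8) :=
      hGim (Set.mem_image_of_mem _ hzG)
    rw [Metric.mem_ball, Real.dist_eq] at this
    rw [abs_sub_comm]
    exact this.le
  intro x hx x' hx' w hw
  obtain ⟨z, hz, h1⟩ := hVE x hx w hw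
  obtain ⟨z', hz', h2⟩ := hVE x' hx' w hw
  have h3 := hEpair z hz z' hz' w hw
  calc |f (x, w) - f (x', w)|
      ≤ |f (x, w) - f (z, w)| + |f (z, w) - f (z', w)| + |f (z', w) - f (x', w)| := by
        linarith [abs_sub_le (f (x,w)) (f (z,w)) (f (z',w)),
          abs_sub_le (f (x,w)) (f (z',w)) (f (x',w))]
    _ ≤ ε'/8 + 3 * (ε'/4) + ε'/8 := by
        gcongr
        rw [abs_sub_comm]; exact h2
    _ = ε' := by ring

end chunk3

section chunk4

variable {Y T : Type*} [TopologicalSpace Y] [CompactSpace Y]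
variable {e : Y → T → ℝ}

lemma exists_next (he : Topology.IsEmbedding e)
    (hcube : ∀ y t, e y t ∈ Set.Icc (0:ℝ) 1)
    (hsigma : Dense {y : Y | {t : T | e y t ≠ 0}.Countable})
    {S : Set T} (hS : S.Countable) :
    ∃ S' : Set T, S ⊆ S' ∧ S'.Countable ∧
      ∀ y : Y, ∀ F : Set T, F.Finite → F ⊆ S → ∀ δ : ℝ, 0 < δ →
        ∃ d : Y, {t : T | e d t ≠ 0} ⊆ S' ∧ ∀ t ∈ F, |e d t - e y t| ≤ δ := by
  classical
  obtain ⟨σ, hσ⟩ := exists_sigma hS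
  -- nets for the whole space
  have hnets : ∀ j : ℕ, ∃ N : Set Y, N.Finite ∧ N ⊆ Set.univ ∧
      ∀ v ∈ Set.univ, ∃ u ∈ N, dd e σ u v < 1/(j+1) :=
    fun j => exists_net he.continuous hcube Set.univ isCompact_univ (1/(j+1)) (by positivity)
  choose N hNfin _ hNcov using hnets
  -- sigma-points approximating arbitrary points in dd
  have hp : ∀ j : ℕ, ∀ u : Y, ∃ p : Y, {t : T | e p t ≠ 0}.Countable ∧
      dd e σ u p < 1/(j+1) := by
    intro j u
    have hopen : IsOpen {v : Y | dd e σ u v < 1/(j+1)} := by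
      have hc : Continuous (fun v : Y => dd e σ u v) :=
        (continuous_dd he.continuous hcube).comp (continuous_const.prodMk continuous_id)
      exact isOpen_lt hc continuous_const
    have hne : {v : Y | dd e σ u v < 1/(j+1)}.Nonempty :=
      ⟨u, by simpa [dd_self] using (by positivity : (0:ℝ) < 1/(j+1))⟩
    obtain ⟨p, hp1, hp2⟩ := hsigma.inter_open_nonempty _ hopen hne
    exact ⟨p, hp2, hp1⟩
  choose p hpcnt hpdd using hp
  refine ⟨S ∪ ⋃ (j : ℕ), ⋃ u ∈ N j, {t : T | e (p j u) t ≠ 0}, Set.subset_union_left,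
    ?_, ?_⟩
  · apply Set.Countable.union hS
    apply Set.countable_iUnion
    intro j
    exact Set.Countable.biUnion (hNfin j).countable (fun u _ => hpcnt j u)
  · intro y F hF hFS δ hδ
    -- index bound for coordinates of F
    set m : T → ℕ := fun t => if h : t ∈ S then Classical.choose (hσ t h) else 0 with hm
    have hmspec : ∀ t ∈ F, σ (m t) = some t := by
      intro t ht
      have htS : t ∈ S := hFS ht
      simp only [hm, dif_pos htS]
      exact Classical.choose_spec (hσ t htS)
    set M : ℕ := hF.toFinset.sup m with hM
    have hmM : ∀ t ∈ F, m t ≤ M := fun t ht =>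
      Finset.le_sup (hF.mem_toFinset.2 ht)
    -- choose fine net scale
    obtain ⟨j, hj⟩ := exists_nat_one_div_lt
      (show (0:ℝ) < δ / (2 * 2^M) by positivity)
    obtain ⟨u, huN, hudd⟩ := hNcov j y (Set.mem_univ y)
    refine ⟨p j u, ?_, ?_⟩
    · intro t ht
      apply Set.mem_union_right
      exact Set.mem_iUnion.2 ⟨j, Set.mem_iUnion.2 ⟨u, Set.mem_iUnion.2 ⟨huN, ht⟩⟩⟩
    · intro t ht
      have hcoord := coord_le_dd (σ := σ) hcube y (p j u) (m t) t (hmspec t ht)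
      have htri : dd e σ y (p j u) ≤ dd e σ y u + dd e σ u (p j u) :=
        dd_triangle hcube y u (p j u)
      have hyu : dd e σ y u = dd e σ u y := dd_comm y u
      have hsum : dd e σ y (p j u) < 2 * (1/(j+1)) := by
        have := hpdd j u
        rw [hyu] at htri
        linarith [hudd]
      have hpow : (1/2 : ℝ) ^ (m t) * |e y t - e (p j u) t| ≤ dd e σ y (p j u) := hcoord
      have h2M : (1/2 : ℝ) ^ M ≤ (1/2 : ℝ) ^ (m t) := by
        apply pow_le_pow_of_le_one (by norm_num) (by norm_num) (hmM t ht)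
      have hpos : (0:ℝ) < (1/2 : ℝ) ^ M := by positivity
      rw [abs_sub_comm]
      have h1 : (1/2 : ℝ) ^ M * |e y t - e (p j u) t| ≤ dd e σ y (p j u) := by
        calc (1/2 : ℝ) ^ M * |e y t - e (p j u) t|
            ≤ (1/2 : ℝ) ^ (m t) * |e y t - e (p j u) t| := by
              apply mul_le_mul_of_nonneg_right h2M (abs_nonneg _)
          _ ≤ dd e σ y (p j u) := hpow
      have h2 : |e y t - e (p j u) t| ≤ dd e σ y (p j u) / (1/2 : ℝ) ^ M := by
        rw [le_div_iff₀ hpos]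
        linarith [h1]
      calc |e y t - e (p j u) t| ≤ dd e σ y (p j u) / (1/2 : ℝ) ^ M := h2
        _ ≤ (2 * (1/(j+1))) / (1/2 : ℝ) ^ M := by
            gcongr
        _ = 2 * 2^M * (1/(j+1)) := by
            rw [div_eq_mul_inv]
            have : ((1/2 : ℝ) ^ M)⁻¹ = 2 ^ M := by
              rw [one_div, inv_pow, inv_inv]
            rw [this]; ring
        _ ≤ δ := by
            have h3 : (1:ℝ)/(j+1) ≤ δ / (2 * 2^M) := hj.le
            have h4 : (0:ℝ) < 2 * 2^M := by positivity
            calc 2 * 2^M * (1/(j+1)) ≤ 2 * 2^M * (δ / (2 * 2^M)) := by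
                  apply mul_le_mul_of_nonneg_left h3 h4.le
              _ = δ := by field_simp
end chunk4

section chunk5

variable {Y T : Type*} [TopologicalSpace Y] [CompactSpace Y]
variable {e : Y → T → ℝ}

lemma exists_invariant (he : Topology.IsEmbedding e)
    (hcube : ∀ y t, e y t ∈ Set.Icc (0:ℝ) 1)
    (hsigma : Dense {y : Y | {t : T | e y t ≠ 0}.Countable})
    {S₀ : Set T} (hS₀ : S₀.Countable) :
    ∃ S : Set T, S₀ ⊆ S ∧ S.Countable ∧
      ∀ y : Y, ∃ z : Y, (∀ t ∈ S, e z t = e y t) ∧ (∀ t ∉ S, e z t = 0) := by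
  classical
  -- one-step function
  have hstep : ∀ q : {S : Set T // S.Countable}, ∃ q' : {S : Set T // S.Countable},
      q.1 ⊆ q'.1 ∧ ∀ y : Y, ∀ F : Set T, F.Finite → F ⊆ q.1 → ∀ δ : ℝ, 0 < δ →
        ∃ d : Y, {t : T | e d t ≠ 0} ⊆ q'.1 ∧ ∀ t ∈ F, |e d t - e y t| ≤ δ := by
    rintro ⟨S, hS⟩
    obtain ⟨S', h1, h2, h3⟩ := exists_next he hcube hsigma hS
    exact ⟨⟨S', h2⟩, h1, h3⟩
  choose g hg1 hg2 using hstep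
  set c : ℕ → {S : Set T // S.Countable} := fun n => g^[n] ⟨S₀, hS₀⟩ with hc
  have hc0 : c 0 = ⟨S₀, hS₀⟩ := rfl
  have hcsucc : ∀ n, c (n+1) = g (c n) := fun n => Function.iterate_succ_apply' g n _
  have hmono : ∀ n, (c n).1 ⊆ (c (n+1)).1 := by
    intro n; rw [hcsucc]; exact hg1 (c n)
  have hmono' : ∀ {i j}, i ≤ j → (c i).1 ⊆ (c j).1 := by
    intro i j hij
    induction j with
    | zero => rw [Nat.le_zero.1 hij]
    | succ j ih =>
      rcases Nat.lt_or_ge i (j+1) with h | h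
      · exact (ih (Nat.lt_succ_iff.1 h)).trans (hmono j)
      · rw [Nat.le_antisymm hij h]
  set S : Set T := ⋃ n, (c n).1 with hSdef
  have hScnt : S.Countable := Set.countable_iUnion fun n => (c n).2
  have hS₀S : S₀ ⊆ S := by
    intro t ht
    exact Set.mem_iUnion.2 ⟨0, show t ∈ (c 0).1 from hc0 ▸ ht⟩
  refine ⟨S, hS₀S, hScnt, ?_⟩
  intro y
  set m : T → ℝ := fun t => if t ∈ S then e y t else 0 with hm
  -- m is in the closure of the range of e
  have hcompact : IsCompact (Set.range e) := isCompact_range he.continuous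
  have hclosed : IsClosed (Set.range e) := hcompact.isClosed
  have hmem : m ∈ Set.range e := by
    rw [← hclosed.closure_eq]
    rw [mem_closure_iff_nhds]
    intro W hW
    rw [nhds_pi, Filter.mem_pi] at hW
    obtain ⟨I, hIfin, t, ht, hsub⟩ := hW
    -- per-coordinate radii
    have hball : ∀ i : T, ∃ ε : ℝ, 0 < ε ∧ (i ∈ I → Metric.ball (m i) ε ⊆ t i) := by
      intro i
      by_cases hi : i ∈ I
      · obtain ⟨ε, hε, hb⟩ := Metric.mem_nhds_iff.1 (ht i)
        exact ⟨ε, hε, fun _ => hb⟩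
      · exact ⟨1, one_pos, fun h => absurd h hi⟩
    choose εf hεf hballf using hball
    -- a single positive radius
    have hmin : ∃ δ : ℝ, 0 < δ ∧ ∀ i ∈ I, δ ≤ εf i := by
      rcases hIfin.toFinset.eq_empty_or_nonempty with hemp | hne
      · refine ⟨1, one_pos, fun i hi => ?_⟩
        exact absurd (hIfin.mem_toFinset.2 hi) (hemp ▸ Finset.notMem_empty i)
      · obtain ⟨i₀, hi₀, hmin⟩ := hIfin.toFinset.exists_min_image εf hne
        refine ⟨εf i₀, hεf i₀, fun i hi => hmin i (hIfin.mem_toFinset.2 hi)⟩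
    obtain ⟨δ, hδpos, hδle⟩ := hmin
    -- the finite part of I inside S is inside some stage of the chain
    have hIS : ∃ k, I ∩ S ⊆ (c k).1 := by
      have hfin : (I ∩ S).Finite := hIfin.inter_of_left S
      have hin : ∀ i ∈ I ∩ S, ∃ k, i ∈ (c k).1 := by
        intro i hi
        exact Set.mem_iUnion.1 hi.2
      choose k hk using hin
      classical
      set ktot : T → ℕ := fun i => if h : i ∈ I ∩ S then k i h else 0 with hktot
      have hkin : ∀ i, ∀ hi : i ∈ I ∩ S, i ∈ (c (ktot i)).1 := by
        intro i hi
        simp only [hktot, dif_pos hi]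
        exact hk i hi
      refine ⟨hfin.toFinset.sup ktot, ?_⟩
      intro i hi
      exact hmono' (Finset.le_sup (hfin.mem_toFinset.2 hi)) (hkin i hi)
    obtain ⟨k, hkI⟩ := hIS
    -- get an approximating point with support inside the next stage
    obtain ⟨d, hdsupp, hdapp⟩ := hg2 (c k) y (I ∩ S) (hIfin.inter_of_left S) hkI
      (δ/2) (by positivity)
    refine ⟨e d, hsub ?_, ⟨d, rfl⟩⟩
    rw [Set.mem_pi]
    intro i hi
    apply hballf i hi
    rw [Metric.mem_ball, Real.dist_eq]
    by_cases hiS : i ∈ S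
    · have := hdapp i ⟨hi, hiS⟩
      have hmi : m i = e y i := if_pos hiS
      rw [hmi]
      calc |e d i - e y i| ≤ δ/2 := this
        _ < δ := by linarith
        _ ≤ εf i := hδle i hi
    · have hmi : m i = 0 := if_neg hiS
      have hdi : e d i = 0 := by
        by_contra hne
        have h1 : i ∈ (c (k+1)).1 := by rw [hcsucc]; exact hdsupp hne
        exact hiS (Set.mem_iUnion.2 ⟨k+1, h1⟩)
      rw [hmi, hdi]
      simpa using lt_of_lt_of_le hδpos (hδle i hi)
  obtain ⟨z, hz⟩ := hmem
  refine ⟨z, fun t ht => ?_, fun t ht => ?_⟩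
  · have : e z t = m t := by rw [hz]
    rw [this, hm]; exact if_pos ht
  · have : e z t = m t := by rw [hz]
    rw [this, hm]; exact if_neg ht

end chunk5

section chunk6

variable {X : Type*} [TopologicalSpace X] [BaireSpace X]

/-- Abstract Baire-category "game" lemma: given a strategy shrinking any nonempty open
set (with state), there is a play of the game together with a point in the intersection
of all the strategy's responses. -/
lemma baire_game {State : Type*} (U₀ : Set X) (hU₀ : IsOpen U₀) (hU₀ne : U₀.Nonempty)
    (st₀ : State) (step : Set X → State → Set X × State)
    (hstep : ∀ V st, IsOpen V → V.Nonempty →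
      IsOpen (step V st).1 ∧ (step V st).1.Nonempty ∧ (step V st).1 ⊆ V) :
    ∃ (p : ℕ → Set X × State) (x : X),
      p 0 = step U₀ st₀ ∧
      (∀ n, ∃ V, IsOpen V ∧ V.Nonempty ∧ V ⊆ (p n).1 ∧ p (n+1) = step V (p n).2) ∧
      ∀ n, x ∈ (p n).1 := by
  classical
  set Tnext : Set X × State → Set (Set X × State) := fun p =>
    {q | ∃ V, IsOpen V ∧ V.Nonempty ∧ V ⊆ p.1 ∧ q = step V p.2} with hTnext
  have hTn : ∀ p : Set X × State, ∀ q ∈ Tnext p, IsOpen q.1 ∧ q.1.Nonempty ∧ q.1 ⊆ p.1 := by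
    rintro p q ⟨V, hVo, hVne, hVsub, rfl⟩
    obtain ⟨h1, h2, h3⟩ := hstep V p.2 hVo hVne
    exact ⟨h1, h2, h3.trans hVsub⟩
  -- maximal antichains
  have hA : ∀ p : Set X × State, ∃ A : Set (Set X × State), IsOpen p.1 → p.1.Nonempty →
      (A ⊆ Tnext p) ∧ (∀ q ∈ A, ∀ q' ∈ A, q ≠ q' → q.1 ∩ q'.1 = ∅) ∧
      p.1 ⊆ closure (⋃ q ∈ A, q.1) := by
    intro p
    by_cases hp : IsOpen p.1 ∧ p.1.Nonempty
    swap
    · exact ⟨∅, fun h1 h2 => absurd ⟨h1, h2⟩ hp⟩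
    obtain ⟨hpo, hpne⟩ := hp
    obtain ⟨M, hM⟩ := zorn_subset {A : Set (Set X × State) | A ⊆ Tnext p ∧
        ∀ q ∈ A, ∀ q' ∈ A, q ≠ q' → q.1 ∩ q'.1 = ∅} (by
      intro c hc hchain
      refine ⟨⋃₀ c, ⟨?_, ?_⟩, fun s hs => Set.subset_sUnion_of_mem hs⟩
      · intro q hq
        obtain ⟨A, hA, hqA⟩ := hq
        exact (hc hA).1 hqA
      · rintro q ⟨A, hA, hqA⟩ q' ⟨A', hA', hqA'⟩ hne
        rcases hchain.total hA hA' with h | h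
        · exact (hc hA').2 q (h hqA) q' hqA' hne
        · exact (hc hA).2 q hqA q' (h hqA') hne)
    have hMS := hM.prop
    refine ⟨M, fun _ _ => ⟨hMS.1, hMS.2, ?_⟩⟩
    intro x hx
    rw [mem_closure_iff]
    intro O hO hxO
    have hHo : IsOpen (O ∩ p.1) := hO.inter hpo
    have hHne : (O ∩ p.1).Nonempty := ⟨x, hxO, hx⟩
    have hqT : step (O ∩ p.1) p.2 ∈ Tnext p :=
      ⟨O ∩ p.1, hHo, hHne, Set.inter_subset_right, rfl⟩
    obtain ⟨hqo, hqne, hqsub⟩ := hstep (O ∩ p.1) p.2 hHo hHne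
    by_cases hmeet : ∃ r ∈ M, ((step (O ∩ p.1) p.2).1 ∩ r.1).Nonempty
    · obtain ⟨r, hrM, z, hz1, hz2⟩ := hmeet
      exact ⟨z, (hqsub hz1).1, Set.mem_biUnion hrM hz2⟩
    · push_neg at hmeet
      have hMq : M ∪ {step (O ∩ p.1) p.2} ∈ {A : Set (Set X × State) | A ⊆ Tnext p ∧
          ∀ q ∈ A, ∀ q' ∈ A, q ≠ q' → q.1 ∩ q'.1 = ∅} := by
        constructor
        · rintro r (hr | hr)
          · exact hMS.1 hr
          · rw [hr]; exact hqT
        · rintro r (hr | hr) r' (hr2 | hr2) hne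
          · exact hMS.2 r hr r' hr2 hne
          · rw [hr2, Set.inter_comm]
            exact hmeet r hr
          · rw [hr]
            exact hmeet r' hr2
          · rw [hr, hr2] at hne; exact absurd rfl hne
      have hsub' : M ∪ {step (O ∩ p.1) p.2} ⊆ M := hM.2 hMq Set.subset_union_left
      have hqM : step (O ∩ p.1) p.2 ∈ M := hsub' (Or.inr rfl)
      obtain ⟨z, hz⟩ := hqne
      exact ⟨z, (hqsub hz).1, Set.mem_biUnion hqM hz⟩
  choose A hAspec using hA
  -- the levels
  obtain ⟨hro, hrne, hrsub⟩ := hstep U₀ st₀ hU₀ hU₀ne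
  set F : ℕ → Set (Set X × State) := fun n =>
    Nat.rec {step U₀ st₀} (fun _ prev => ⋃ p ∈ prev, A p) n with hF
  have hF0 : F 0 = {step U₀ st₀} := rfl
  have hFsucc : ∀ n, F (n+1) = ⋃ p ∈ F n, A p := fun n => rfl
  -- invariants
  have hgood : ∀ n, ∀ p ∈ F n, IsOpen p.1 ∧ p.1.Nonempty := by
    intro n
    induction n with
    | zero =>
      intro p hp
      rw [hF0, Set.mem_singleton_iff] at hp
      rw [hp]; exact ⟨hro, hrne⟩
    | succ n ih =>
      intro q hq
      rw [hFsucc] at hq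
      obtain ⟨p, hp, hqA⟩ := Set.mem_iUnion₂.1 hq
      obtain ⟨hpo, hpne⟩ := ih p hp
      have hspec := hAspec p hpo hpne
      obtain ⟨h1, h2, _⟩ := hTn p q (hspec.1 hqA)
      exact ⟨h1, h2⟩
  have hdisj : ∀ n, ∀ p ∈ F n, ∀ p' ∈ F n, p ≠ p' → p.1 ∩ p'.1 = ∅ := by
    intro n
    induction n with
    | zero =>
      intro p hp p' hp' hne
      rw [hF0, Set.mem_singleton_iff] at hp hp'
      rw [hp, hp'] at hne; exact absurd rfl hne
    | succ n ih =>
      intro q hq q' hq' hne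
      rw [hFsucc] at hq hq'
      obtain ⟨p, hp, hqA⟩ := Set.mem_iUnion₂.1 hq
      obtain ⟨p', hp', hqA'⟩ := Set.mem_iUnion₂.1 hq'
      obtain ⟨hpo, hpne⟩ := hgood n p hp
      obtain ⟨hpo', hpne'⟩ := hgood n p' hp'
      have hspec := hAspec p hpo hpne
      have hspec' := hAspec p' hpo' hpne'
      by_cases hpp : p = p'
      · subst hpp
        exact hspec.2.1 q hqA q' hqA' hne
      · have h1 : q.1 ⊆ p.1 := (hTn p q (hspec.1 hqA)).2.2
        have h2 : q'.1 ⊆ p'.1 := (hTn p' q' (hspec'.1 hqA')).2.2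
        have h3 := ih p hp p' hp' hpp
        rw [← Set.subset_empty_iff, ← h3]
        exact Set.inter_subset_inter h1 h2
  -- dense open sets
  set D : ℕ → Set X := fun n => ⋃ p ∈ F n, p.1 with hD
  have hDopen : ∀ n, IsOpen (D n) :=
    fun n => isOpen_biUnion fun p hp => (hgood n p hp).1
  set E : ℕ → Set X := fun n => D (n+1) ∪ (closure (D n))ᶜ with hE
  have hEopen : ∀ n, IsOpen (E n) := fun n => (hDopen (n+1)).union isClosed_closure.isOpen_compl
  have hEdense : ∀ n, Dense (E n) := by
    intro n
    rw [dense_iff_inter_open]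
    intro O hO hOne
    by_cases hmeet : (O ∩ D n).Nonempty
    · obtain ⟨z, hzO, hzD⟩ := hmeet
      obtain ⟨p, hp, hzp⟩ := Set.mem_iUnion₂.1 hzD
      obtain ⟨hpo, hpne⟩ := hgood n p hp
      have hspec := hAspec p hpo hpne
      have hzcl : z ∈ closure (⋃ q ∈ A p, q.1) := hspec.2.2 hzp
      rw [mem_closure_iff] at hzcl
      obtain ⟨w, hw1, hw2⟩ := hzcl (O ∩ p.1) (hO.inter hpo) ⟨hzO, hzp⟩
      obtain ⟨q, hqA, hwq⟩ := Set.mem_iUnion₂.1 hw2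
      refine ⟨w, hw1.1, Or.inl ?_⟩
      have hqF : q ∈ F (n+1) := by
        rw [hFsucc]
        exact Set.mem_biUnion hp hqA
      exact Set.mem_biUnion hqF hwq
    · obtain ⟨z, hz⟩ := hOne
      refine ⟨z, hz, Or.inr ?_⟩
      intro hcl
      rw [mem_closure_iff] at hcl
      obtain ⟨w, hw1, hw2⟩ := hcl O hO hz
      exact hmeet ⟨w, hw1, hw2⟩
  have hdense : Dense (⋂ n, E n) := dense_iInter_of_isOpen hEopen hEdense
  obtain ⟨x, hxr, hxE⟩ := hdense.inter_open_nonempty (step U₀ st₀).1 hro hrne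
  -- extract the chain through x
  have hstep' : ∀ n, ∀ p : Set X × State, p ∈ F n → x ∈ p.1 →
      ∃ q : Set X × State, q ∈ F (n+1) ∧ x ∈ q.1 ∧ q ∈ Tnext p := by
    intro n p hp hxp
    have hxEn : x ∈ E n := Set.mem_iInter.1 hxE n
    have hxD : x ∈ D (n+1) := by
      rcases hxEn with h | h
      · exact h
      · exact absurd (subset_closure (Set.mem_biUnion hp hxp)) h
    obtain ⟨q, hq, hxq⟩ := Set.mem_iUnion₂.1 hxD
    have hq' := hq
    rw [hFsucc] at hq'
    obtain ⟨p', hp', hqA⟩ := Set.mem_iUnion₂.1 hq'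
    obtain ⟨hpo', hpne'⟩ := hgood n p' hp'
    have hspec' := hAspec p' hpo' hpne'
    have hqsub : q.1 ⊆ p'.1 := (hTn p' q (hspec'.1 hqA)).2.2
    have hpp : p' = p := by
      by_contra hne
      have hmem : x ∈ p'.1 ∩ p.1 := ⟨hqsub hxq, hxp⟩
      rw [hdisj n p' hp' p hp hne] at hmem
      exact hmem
    subst hpp
    exact ⟨q, hq, hxq, hspec'.1 hqA⟩
  choose Q hQ1 hQ2 hQ3 using hstep'
  set pc : ∀ n : ℕ, {p : Set X × State // p ∈ F n ∧ x ∈ p.1} := fun n =>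
    Nat.rec ⟨step U₀ st₀, Set.mem_singleton _, hxr⟩
      (fun n prev => ⟨Q n prev.1 prev.2.1 prev.2.2,
        hQ1 n prev.1 prev.2.1 prev.2.2, hQ2 n prev.1 prev.2.1 prev.2.2⟩) n with hpc
  refine ⟨fun n => (pc n).1, x, rfl, ?_, fun n => (pc n).2.2⟩
  intro n
  have hT : (pc (n+1)).1 ∈ Tnext (pc n).1 := hQ3 n (pc n).1 (pc n).2.1 (pc n).2.2
  obtain ⟨V, h1, h2, h3, h4⟩ := hT
  exact ⟨V, h1, h2, h3, h4⟩

end chunk6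

section chunk7

variable {X Y T : Type*} [TopologicalSpace X] [BaireSpace X]
  [TopologicalSpace Y] [CompactSpace Y]

/-- The key statement: on some nonempty open subset of any nonempty open set,
`f` is uniformly flat in the first variable over ALL of `Y`. -/
lemma star_lemma {e : Y → T → ℝ} (he : Topology.IsEmbedding e)
    (hcube : ∀ y t, e y t ∈ Set.Icc (0:ℝ) 1)
    (hsigma : Dense {y : Y | {t : T | e y t ≠ 0}.Countable})
    (f : X × Y → ℝ)
    (hf1 : ∀ y : Y, QuasiContinuous fun x : X => f (x, y))
    (hf2 : ∀ x : X, Continuous fun y => f (x, y))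
    {ε : ℝ} (hε : 0 < ε) {U : Set X} (hU : IsOpen U) (hUne : U.Nonempty) :
    ∃ V : Set X, IsOpen V ∧ V.Nonempty ∧ V ⊆ U ∧
      ∀ x ∈ V, ∀ x' ∈ V, ∀ y : Y, |f (x, y) - f (x', y)| ≤ ε := by
  classical
  by_contra hfail
  push_neg at hfail
  have hfail' : ∀ V : Set X, IsOpen V → V.Nonempty → V ⊆ U →
      ∃ x ∈ V, ∃ x' ∈ V, ∃ y : Y, ε < |f (x, y) - f (x', y)| := hfail
  -- the state space
  set Inv : Set T → Prop := fun S =>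
    ∀ y : Y, ∃ z : Y, (∀ t ∈ S, e z t = e y t) ∧ (∀ t ∉ S, e z t = 0) with hInv
  set StateT := {S : Set T // S.Countable ∧ Inv S} × (Y × Y × X) with hStateT
  -- the step construction
  have hstep_ex : ∀ (V : Set X) (st : StateT), ∃ r : Set X × StateT,
      (IsOpen V → V.Nonempty → IsOpen r.1 ∧ r.1.Nonempty ∧ r.1 ⊆ V) ∧
      (IsOpen V → V.Nonempty → V ⊆ U →
        (st.1.1 ⊆ r.2.1.1 ∧
         {t : T | e r.2.2.1 t ≠ 0} ⊆ r.2.1.1 ∧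
         (∀ t ∈ st.1.1, e r.2.2.2.1 t = e r.2.2.1 t) ∧
         (∀ t ∉ st.1.1, e r.2.2.2.1 t = 0) ∧
         3*ε/8 ≤ |f (r.2.2.2.2, r.2.2.1) - f (r.2.2.2.2, r.2.2.2.1)| ∧
         (∀ z ∈ r.1, |f (z, r.2.2.1) - f (r.2.2.2.2, r.2.2.1)| ≤ ε/16) ∧
         (∀ z ∈ r.1, |f (z, r.2.2.2.1) - f (r.2.2.2.2, r.2.2.2.1)| ≤ ε/8))) := by
    intro V st
    by_cases hgood : IsOpen V ∧ V.Nonempty ∧ V ⊆ U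
    swap
    · refine ⟨(V, st), fun h1 h2 => ⟨h1, h2, subset_rfl⟩, fun h1 h2 h3 => absurd ⟨h1, h2, h3⟩ hgood⟩
    obtain ⟨hVo, hVne, hVU⟩ := hgood
    have hScnt := st.1.2.1
    have hSinv := st.1.2.2
    obtain ⟨σ, hσ⟩ := exists_sigma hScnt
    -- flatten over Kset e S
    obtain ⟨V₁, hV₁o, hV₁ne, hV₁V, hV₁flat⟩ :=
      flat_lemma he hcube f hf1 hf2 hσ (show (0:ℝ) < ε/8 by positivity) hVo hVne
    -- failure witnesses
    obtain ⟨x, hx, x', hx', yh, hyh⟩ := hfail' V₁ hV₁o hV₁ne (hV₁V.trans hVU)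
    -- move the witness into the Σ-product
    have hOopen : IsOpen ({u : Y | |f (x, u) - f (x, yh)| < ε/16} ∩
        {u : Y | |f (x', u) - f (x', yh)| < ε/16}) := by
      apply IsOpen.inter
      · have : Continuous fun u : Y => |f (x, u) - f (x, yh)| :=
          ((hf2 x).sub continuous_const).abs
        exact isOpen_lt this continuous_const
      · have : Continuous fun u : Y => |f (x', u) - f (x', yh)| :=
          ((hf2 x').sub continuous_const).abs
        exact isOpen_lt this continuous_const
    have hOne : ({u : Y | |f (x, u) - f (x, yh)| < ε/16} ∩
        {u : Y | |f (x', u) - f (x', yh)| < ε/16}).Nonempty := by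
      refine ⟨yh, ?_, ?_⟩ <;>
        · simp only [Set.mem_setOf_eq, sub_self, abs_zero]
          positivity
    obtain ⟨yt, hytO, hytcnt⟩ := hsigma.inter_open_nonempty _ hOopen hOne
    have hgap : 7*ε/8 ≤ |f (x, yt) - f (x', yt)| := by
      have h1 : |f (x, yt) - f (x, yh)| < ε/16 := hytO.1
      have h2 : |f (x', yt) - f (x', yh)| < ε/16 := hytO.2
      rw [abs_lt] at h1 h2
      rcases abs_cases (f (x, yt) - f (x', yt)) with ⟨hc, _⟩ | ⟨hc, _⟩ <;>
        rcases abs_cases (f (x, yh) - f (x', yh)) with ⟨hc', _⟩ | ⟨hc', _⟩ <;>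
        rw [hc] <;> rw [hc'] at hyh <;> linarith
    -- the masked point
    obtain ⟨w, hw1, hw2⟩ := hSinv yt
    have hwK : w ∈ Kset e st.1.1 := fun t ht => hw2 t ht
    have hflat : |f (x, w) - f (x', w)| ≤ ε/8 := hV₁flat x hx x' hx' w hwK
    -- pick the side with a big gap
    have hside : 3*ε/8 ≤ |f (x, yt) - f (x, w)| ∨ 3*ε/8 ≤ |f (x', yt) - f (x', w)| := by
      by_contra hcon
      push_neg at hcon
      obtain ⟨hc1, hc2⟩ := hcon
      have := abs_sub_le (f (x, yt)) (f (x, w)) (f (x', yt))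
      have := abs_sub_le (f (x, w)) (f (x', w)) (f (x', yt))
      rw [abs_sub_comm (f (x', w)) (f (x', yt))] at this
      rcases abs_cases (f (x, yt) - f (x, w)) with ⟨h, _⟩ | ⟨h, _⟩ <;>
        rcases abs_cases (f (x', yt) - f (x', w)) with ⟨h', _⟩ | ⟨h', _⟩ <;>
        rcases abs_cases (f (x, w) - f (x', w)) with ⟨h'', _⟩ | ⟨h'', _⟩ <;>
        rcases abs_cases (f (x, yt) - f (x', yt)) with ⟨h''', _⟩ | ⟨h''', _⟩ <;>
        linarith [hgap, hflat, hc1, hc2]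
    set xp : X := if 3*ε/8 ≤ |f (x, yt) - f (x, w)| then x else x' with hxp
    have hxpV₁ : xp ∈ V₁ := by
      rw [hxp]; split <;> assumption
    have hxpgap : 3*ε/8 ≤ |f (xp, yt) - f (xp, w)| := by
      rw [hxp]
      split
      · assumption
      · rcases hside with h | h
        · contradiction
        · exact h
    -- quasicontinuity at xp in the direction yt
    obtain ⟨G, hGo, hGne, hGV₁, hGim⟩ := hf1 yt xp V₁ (hV₁o.mem_nhds hxpV₁)
      (Metric.ball (f (xp, yt)) (ε/16)) (Metric.ball_mem_nhds _ (by positivity))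
    -- extend the countable invariant set
    obtain ⟨S', hS'sub, hS'cnt, hS'inv⟩ :=
      exists_invariant he hcube hsigma ((hScnt.union hytcnt) :
        (st.1.1 ∪ {t : T | e yt t ≠ 0}).Countable)
    refine ⟨(G, (⟨S', hS'cnt, hS'inv⟩, yt, w, xp)), fun _ _ => ⟨hGo, hGne, hGV₁.trans hV₁V⟩,
      fun _ _ _ => ⟨?_, ?_, hw1, hw2, hxpgap, ?_, ?_⟩⟩
    · exact (Set.subset_union_left).trans hS'sub
    · exact (Set.subset_union_right).trans hS'sub
    · intro z hz
      have : f (z, yt) ∈ Metric.ball (f (xp, yt)) (ε/16) := hGim (Set.mem_image_of_mem _ hz)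
      rw [Metric.mem_ball, Real.dist_eq] at this
      exact this.le
    · intro z hz
      exact hV₁flat z (hGV₁ hz) xp hxpV₁ w hwK
  choose stepf hstep1 hstep2 using hstep_ex
  -- initial state
  obtain ⟨S₀, _, hS₀cnt, hS₀inv⟩ := exists_invariant he hcube hsigma (Set.countable_empty (α := T))
  obtain ⟨x₀, hx₀⟩ := id hUne
  obtain ⟨_, _, _, _, y₀, _⟩ := hfail' U hU hUne subset_rfl
  set st₀ : StateT := (⟨S₀, hS₀cnt, hS₀inv⟩, y₀, y₀, x₀) with hst₀
  -- play the game
  obtain ⟨p, xs, hp0, hpsucc, hpx⟩ := baire_game U hU hUne st₀ stepf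
    (fun V st hVo hVne => hstep1 V st hVo hVne)
  -- every open in the play is inside U
  have hpU : ∀ n, (p n).1 ⊆ U := by
    intro n
    induction n with
    | zero =>
      rw [hp0]
      exact (hstep1 U st₀ hU hUne).2.2
    | succ n ih =>
      obtain ⟨V, hVo, hVne, hVsub, heq⟩ := hpsucc n
      rw [heq]
      exact ((hstep1 V (p n).2 hVo hVne).2.2).trans (hVsub.trans ih)
  -- the good properties of consecutive states
  have hPgood : ∀ n,
      ((p n).2.1.1 ⊆ (p (n+1)).2.1.1 ∧
       {t : T | e (p (n+1)).2.2.1 t ≠ 0} ⊆ (p (n+1)).2.1.1 ∧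
       (∀ t ∈ (p n).2.1.1, e (p (n+1)).2.2.2.1 t = e (p (n+1)).2.2.1 t) ∧
       (∀ t ∉ (p n).2.1.1, e (p (n+1)).2.2.2.1 t = 0) ∧
       3*ε/8 ≤ |f ((p (n+1)).2.2.2.2, (p (n+1)).2.2.1) -
           f ((p (n+1)).2.2.2.2, (p (n+1)).2.2.2.1)| ∧
       (∀ z ∈ (p (n+1)).1, |f (z, (p (n+1)).2.2.1) -
           f ((p (n+1)).2.2.2.2, (p (n+1)).2.2.1)| ≤ ε/16) ∧
       (∀ z ∈ (p (n+1)).1, |f (z, (p (n+1)).2.2.2.1) -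
           f ((p (n+1)).2.2.2.2, (p (n+1)).2.2.2.1)| ≤ ε/8)) := by
    intro n
    obtain ⟨V, hVo, hVne, hVsub, heq⟩ := hpsucc n
    have hVU : V ⊆ U := hVsub.trans (hpU n)
    have := hstep2 V (p n).2 hVo hVne hVU
    rw [heq]
    exact this
  -- notations
  set Sn : ℕ → Set T := fun n => (p n).2.1.1 with hSn
  set yn : ℕ → Y := fun n => (p (n+1)).2.2.1 with hyn
  set wn : ℕ → Y := fun n => (p (n+1)).2.2.2.1 with hwn
  have hSmono : ∀ n, Sn n ⊆ Sn (n+1) := fun n => (hPgood n).1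
  have hSmono' : ∀ {i j}, i ≤ j → Sn i ⊆ Sn j := by
    intro i j hij
    induction j with
    | zero => rw [Nat.le_zero.1 hij]
    | succ j ih =>
      rcases Nat.lt_or_ge i (j+1) with h | h
      · exact (ih (Nat.lt_succ_iff.1 h)).trans (hSmono j)
      · rw [Nat.le_antisymm hij h]
  -- the limit countable set
  set Sω : Set T := ⋃ n, Sn n with hSω
  have hSωcnt : Sω.Countable := Set.countable_iUnion fun n => (p n).2.1.2.1
  obtain ⟨σω, hσω⟩ := exists_sigma hSωcnt
  -- all the points live in Kset e Sω
  have hynK : ∀ n, yn n ∈ Kset e Sω := by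
    intro n t ht
    by_contra hne
    exact ht (Set.mem_iUnion.2 ⟨n+1, (hPgood n).2.1 hne⟩)
  have hwnK : ∀ n, wn n ∈ Kset e Sω := by
    intro n t ht
    apply (hPgood n).2.2.2.1
    intro htS
    exact ht (Set.mem_iUnion.2 ⟨n, htS⟩)
  -- gap at the limit point
  have hgapx : ∀ n, 3*ε/16 ≤ |f (xs, yn n) - f (xs, wn n)| := by
    intro n
    have h1 := (hPgood n).2.2.2.2.1
    have h2 := (hPgood n).2.2.2.2.2.1 xs (hpx (n+1))
    have h3 := (hPgood n).2.2.2.2.2.2 xs (hpx (n+1))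
    set a := f ((p (n+1)).2.2.2.2, (p (n+1)).2.2.1)
    set b := f ((p (n+1)).2.2.2.2, (p (n+1)).2.2.2.1)
    rcases abs_cases (f (xs, yn n) - f (xs, wn n)) with ⟨h, _⟩ | ⟨h, _⟩ <;>
      rcases abs_cases (a - b) with ⟨h', _⟩ | ⟨h', _⟩ <;>
      rcases abs_cases (f (xs, yn n) - a) with ⟨h'', _⟩ | ⟨h'', _⟩ <;>
      rcases abs_cases (f (xs, wn n) - b) with ⟨h''', _⟩ | ⟨h''', _⟩ <;>
      linarith
  -- uniform continuity of f (xs, ·) on Kset e Sω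
  obtain ⟨k, hk⟩ := uniform_cont (σ := σω) he hcube hσω
    (fun y => f (xs, y)) (hf2 xs) (show (0:ℝ) < ε/8 by positivity)
  -- find a scale
  obtain ⟨N, hN⟩ := exists_pow_lt_of_lt_one
    (show (0:ℝ) < 1/(2*(k+1)) by positivity) (show (1/2 : ℝ) < 1 by norm_num)
  -- index bound
  have hmex : ∀ i : ℕ, ∃ m : ℕ, ∀ t, σω i = some t → t ∈ Sω → t ∈ Sn m := by
    intro i
    by_cases h : ∃ t, σω i = some t ∧ t ∈ Sω
    · obtain ⟨t, hti, htω⟩ := h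
      obtain ⟨m, hm⟩ := Set.mem_iUnion.1 htω
      refine ⟨m, fun t' ht' _ => ?_⟩
      rw [hti] at ht'
      injection ht' with hh
      rw [← hh]; exact hm
    · exact ⟨0, fun t' ht' ht'ω => absurd ⟨t', ht', ht'ω⟩ h⟩
  choose mfun hmfun using hmex
  set n₀ : ℕ := (Finset.range N).sup mfun with hn₀
  -- at stage n₀ the two points agree on the first N coordinates
  have hagree : ∀ i < N, ∀ t, σω i = some t → e (yn n₀) t = e (wn n₀) t := by
    intro i hi t ht
    by_cases htω : t ∈ Sω
    · have h1 : t ∈ Sn (mfun i) := hmfun i t ht htω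
      have h2 : mfun i ≤ n₀ := Finset.le_sup (Finset.mem_range.2 hi)
      have h3 : t ∈ Sn n₀ := hSmono' h2 h1
      exact ((hPgood n₀).2.2.1 t h3).symm
    · rw [hynK n₀ t htω, hwnK n₀ t htω]
  have hdd : dd e σω (yn n₀) (wn n₀) ≤ 1/(k+1) := by
    calc dd e σω (yn n₀) (wn n₀) ≤ 2 * (1/2 : ℝ)^N := dd_le_of_eq_on hcube _ _ N hagree
      _ ≤ 1/(k+1) := by
          rw [show (2 : ℝ) * (1/2)^N = ((1/2)^N) * 2 by ring]
          rw [show (1 : ℝ)/(k+1) = (1/(2*(k+1))) * 2 by field_simp]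
          apply mul_le_mul_of_nonneg_right hN.le (by norm_num)
  have hsmall := hk (yn n₀) (hynK n₀) (wn n₀) (hwnK n₀) hdd
  have := hgapx n₀
  rcases abs_cases (f (xs, yn n₀) - f (xs, wn n₀)) with ⟨h, _⟩ | ⟨h, _⟩ <;>
    · rw [abs_le] at hsmall
      linarith

end chunk7

end ValdiviaKempisty

/-- Corollary 3.5: every Valdivia compact is a Kempisty space. -/
theorem valdivia_isKempisty {X Y T : Type*} [TopologicalSpace X] [BaireSpace X]
    [TopologicalSpace Y] [CompactSpace Y]
    (e : Y → (T → ℝ)) (he : Topology.IsEmbedding e)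
    (hcube : ∀ y t, e y t ∈ Set.Icc (0 : ℝ) 1)
    (hsigma : Dense {y : Y | {t : T | e y t ≠ 0}.Countable})
    (f : X × Y → ℝ)
    (hf1 : ∀ y : Y, QuasiContinuous fun x : X => f (x, y))
    (hf2 : ∀ x : X, Continuous fun y => f (x, y)) :
    NamiokaProperty f := by
  classical
  set W : ℕ → Set X := fun n => {x | ∃ V : Set X, IsOpen V ∧ x ∈ V ∧
    ∀ x' ∈ V, ∀ x'' ∈ V, ∀ y : Y, |f (x', y) - f (x'', y)| ≤ 1/(n+1)} with hW
  have hWopen : ∀ n, IsOpen (W n) := by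
    intro n
    rw [isOpen_iff_mem_nhds]
    rintro x ⟨V, hVo, hxV, hVflat⟩
    apply Filter.mem_of_superset (hVo.mem_nhds hxV)
    intro v hv
    exact ⟨V, hVo, hv, hVflat⟩
  have hWdense : ∀ n, Dense (W n) := by
    intro n
    rw [dense_iff_inter_open]
    intro O hO hOne
    obtain ⟨V, hVo, hVne, hVO, hVflat⟩ := ValdiviaKempisty.star_lemma he hcube hsigma f hf1 hf2
      (show (0:ℝ) < 1/(n+1) by positivity) hO hOne
    obtain ⟨v, hv⟩ := hVne
    exact ⟨v, hVO hv, ⟨V, hVo, hv, hVflat⟩⟩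
  refine ⟨⋂ n, W n, dense_iInter_of_isOpen hWopen hWdense,
    IsGδ.iInter (fun n => (hWopen n).isGδ), ?_⟩
  intro x hx y₀
  rw [ContinuousAt, Metric.tendsto_nhds]
  intro δ hδ
  obtain ⟨n, hn⟩ := exists_nat_one_div_lt (show (0:ℝ) < δ/2 by positivity)
  obtain ⟨V, hVo, hxV, hVflat⟩ := Set.mem_iInter.1 hx n
  set W' : Set Y := {y | |f (x, y) - f (x, y₀)| < 1/(n+1)} with hW'
  have hW'o : IsOpen W' := isOpen_lt (((hf2 x).sub continuous_const).abs) continuous_const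
  have hy₀W' : y₀ ∈ W' := by
    simp only [hW', Set.mem_setOf_eq, sub_self, abs_zero]
    positivity
  apply Filter.eventually_of_mem (prod_mem_nhds (hVo.mem_nhds hxV) (hW'o.mem_nhds hy₀W'))
  rintro ⟨x', y'⟩ ⟨hx', hy'⟩
  have h1 : |f (x', y') - f (x, y')| ≤ 1/(n+1) := hVflat x' hx' x hxV y'
  have h2 : |f (x, y') - f (x, y₀)| < 1/(n+1) := hy'
  rw [Real.dist_eq]
  calc |f (x', y') - f (x, y₀)|
      ≤ |f (x', y') - f (x, y')| + |f (x, y') - f (x, y₀)| := abs_sub_le _ _ _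
    _ < 1/(n+1) + 1/(n+1) := by linarith
    _ < δ := by linarith
end

section
/- If Y ∩ Σ is dense in a compact subspace Y of [0,1]^T, where Σ is the set of points with countable support, then Y ∩ Σ is countably compact, hence a dense Baire subspace of Y; consequently, the intersection of any dense G_δ subset of Y with Y ∩ Σ is dense in Y. -/
/-- A space is countably compact: every countable open cover has a finite subcover. -/
def CountablyCompact (α : Type*) [TopologicalSpace α] : Prop :=
  ∀ U : ℕ → Set α, (∀ n, IsOpen (U n)) → (⋃ n, U n) = Set.univ →
    ∃ F : Finset ℕ, (⋃ n ∈ F, U n) = Set.univ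

/-- In a countably compact space, a decreasing sequence of nonempty closed sets has
nonempty intersection. -/
lemma cc_iInter_nonempty {X : Type*} [TopologicalSpace X] (h : CountablyCompact X)
    (K : ℕ → Set X) (hcl : ∀ n, IsClosed (K n)) (hne : ∀ n, (K n).Nonempty)
    (hdec : ∀ n, K (n + 1) ⊆ K n) : (⋂ n, K n).Nonempty := by
  by_contra hemp
  rw [Set.not_nonempty_iff_eq_empty] at hemp
  obtain ⟨F, hF⟩ := h (fun n => (K n)ᶜ) (fun n => (hcl n).isOpen_compl)
    (by rw [← Set.compl_iInter, hemp, Set.compl_empty])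
  have hanti : Antitone K := antitone_nat_of_succ_le hdec
  obtain ⟨x, hx⟩ := hne (F.sup id)
  have hxmem : x ∈ ⋃ n ∈ F, (K n)ᶜ := hF ▸ Set.mem_univ x
  simp only [Set.mem_iUnion, Set.mem_compl_iff] at hxmem
  obtain ⟨n, hnF, hxn⟩ := hxmem
  exact hxn (hanti (Finset.le_sup (f := id) hnF) hx)

/-- A countably compact regular space is a Baire space. -/
lemma baireSpace_of_countablyCompact {X : Type*} [TopologicalSpace X] [RegularSpace X]
    (h : CountablyCompact X) : BaireSpace X := by
  constructor
  intro f hfo hfd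
  rw [dense_iff_inter_open]
  intro U hU hUne
  have key : ∀ (n : ℕ) (W : Set X), ∃ V : Set X, (IsOpen W ∧ W.Nonempty) →
      IsOpen V ∧ V.Nonempty ∧ closure V ⊆ W ∩ f n := by
    intro n W
    by_cases hW : IsOpen W ∧ W.Nonempty
    · obtain ⟨x, hx⟩ := (hfd n).inter_open_nonempty W hW.1 hW.2
      have hmem : W ∩ f n ∈ nhds x := (hW.1.inter (hfo n)).mem_nhds hx
      obtain ⟨t, ht, htc, hts⟩ := exists_mem_nhds_isClosed_subset hmem
      refine ⟨interior t, fun _ => ⟨isOpen_interior,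
        ⟨x, mem_interior_iff_mem_nhds.mpr ht⟩, ?_⟩⟩
      calc closure (interior t) ⊆ closure t := closure_mono interior_subset
        _ = t := htc.closure_eq
        _ ⊆ W ∩ f n := hts
    · exact ⟨∅, fun hc => absurd hc hW⟩
  choose pick hpick using key
  set V : ℕ → Set X := fun n => Nat.rec U (fun n Vn => pick n Vn) n with hVdef
  have hVs : ∀ n, V (n + 1) = pick n (V n) := fun n => rfl
  have hinv : ∀ n, IsOpen (V n) ∧ (V n).Nonempty := by
    intro n
    induction n with
    | zero => exact ⟨hU, hUne⟩
    | succ n ih =>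
      obtain ⟨h1, h2, _⟩ := hpick n (V n) ih
      exact ⟨h1, h2⟩
  have hclos : ∀ n, closure (V (n + 1)) ⊆ V n ∩ f n :=
    fun n => (hpick n (V n) (hinv n)).2.2
  have hint : (⋂ n, closure (V (n + 1))).Nonempty := by
    refine cc_iInter_nonempty h _ (fun n => isClosed_closure)
      (fun n => (hinv (n + 1)).2.mono subset_closure) (fun n => ?_)
    exact (hclos (n + 1)).trans (Set.inter_subset_left.trans subset_closure)
  obtain ⟨x, hx⟩ := hint
  refine ⟨x, ?_, ?_⟩
  · exact ((hclos 0) (Set.mem_iInter.mp hx 0)).1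
  · exact Set.mem_iInter.mpr fun n => ((hclos n) (Set.mem_iInter.mp hx n)).2

/-- Preimage in a dense subspace of a dense open set is dense. -/
lemma dense_preimage_val {X : Type*} [TopologicalSpace X] {S A : Set X}
    (hS : Dense S) (hA : IsOpen A) (hAd : Dense A) :
    Dense ((Subtype.val : S → X) ⁻¹' A) := by
  rw [dense_iff_inter_open]
  intro U hU hUne
  obtain ⟨W, hW, rfl⟩ := isOpen_induced_iff.mp hU
  obtain ⟨x, hx⟩ := hUne
  have hWA : (W ∩ A).Nonempty := hAd.inter_open_nonempty W hW ⟨x, hx⟩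
  obtain ⟨y, hyWA, hyS⟩ := hS.inter_open_nonempty (W ∩ A) (hW.inter hA) hWA
  exact ⟨⟨y, hyS⟩, hyWA.1, hyWA.2⟩

/-- if the set `S` of points of countable support in a compact `Y ⊆ [0,1]^T` is
dense in `Y`, then `S` is countably compact, a dense Baire subspace of `Y`, and meets every
dense `Gδ` subset of `Y` in a dense set. -/
theorem sigma_part_countablyCompact_baire_dense {T : Type*} (Y : Set (T → ℝ))
    (hYcube : ∀ x ∈ Y, ∀ t, x t ∈ Set.Icc (0 : ℝ) 1)
    (hYcomp : IsCompact Y)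
    (S : Set Y) (hS : S = {y : Y | {t : T | (y : T → ℝ) t ≠ 0}.Countable})
    (hSdense : Dense S) :
    CountablyCompact S ∧ BaireSpace S ∧
      ∀ G : Set Y, Dense G → IsGδ G → Dense (G ∩ S) := by
  haveI : CompactSpace Y := isCompact_iff_compactSpace.mp hYcomp
  have hcc : CountablyCompact S := by
    intro U hUo hUcov
    by_contra hnone
    push_neg at hnone
    have hpick : ∀ n : ℕ, ∃ x : S, x ∉ ⋃ k ∈ Finset.range (n + 1), U k := by
      intro n
      obtain ⟨x, hx⟩ := Set.ne_univ_iff_exists_notMem _ |>.mp (hnone (Finset.range (n + 1)))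
      exact ⟨x, hx⟩
    choose x hx using hpick
    -- the union of supports
    set C : Set T := ⋃ n, {t : T | ((x n : Y) : T → ℝ) t ≠ 0} with hC
    have hCc : C.Countable := by
      refine Set.countable_iUnion fun n => ?_
      exact (Set.ext_iff.mp hS ↑(x n)).mp (x n).2
    -- the compact set of points supported in C
    set A : Set Y := {y : Y | ∀ t, t ∉ C → (y : T → ℝ) t = 0} with hA
    have hAcl : IsClosed A := by
      have : A = ⋂ (t : T) (_ : t ∉ C), (fun y : Y => (y : T → ℝ) t) ⁻¹' {0} := by
        ext y; simp [hA]
      rw [this]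
      exact isClosed_iInter fun t => isClosed_iInter fun _ =>
        isClosed_singleton.preimage ((continuous_apply t).comp continuous_subtype_val)
    have hAS : A ⊆ S := by
      intro y hy
      rw [hS]
      refine hCc.mono ?_
      intro t ht
      by_contra htC
      exact ht (hy t htC)
    have hAcomp : IsCompact A := hAcl.isCompact
    set K : Set S := (Subtype.val : S → Y) ⁻¹' A with hK
    have hKcomp : IsCompact K := by
      rw [Topology.IsEmbedding.subtypeVal.isCompact_iff]
      have : Subtype.val '' K = A := by
        rw [hK, Subtype.image_preimage_coe, Set.inter_eq_self_of_subset_right hAS]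
      rwa [this]
    have hKcov : K ⊆ ⋃ n, U n := hUcov ▸ Set.subset_univ K
    obtain ⟨F, hF⟩ := hKcomp.elim_finite_subcover U hUo hKcov
    set N := F.sup id with hN
    have hxK : x N ∈ K := by
      intro t htC
      by_contra ht0
      exact htC (Set.mem_iUnion.mpr ⟨N, ht0⟩)
    have := hF hxK
    rw [Set.mem_iUnion₂] at this
    obtain ⟨n, hnF, hxn⟩ := this
    apply hx N
    rw [Set.mem_iUnion₂]
    exact ⟨n, Finset.mem_range.mpr (Nat.lt_succ_of_le (Finset.le_sup (f := id) hnF)), hxn⟩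
  have hbaire : BaireSpace S := baireSpace_of_countablyCompact hcc
  refine ⟨hcc, hbaire, ?_⟩
  intro G hGdense hGgδ
  obtain ⟨f, hfo, rfl⟩ := hGgδ.eq_iInter_nat
  have hfd : ∀ n, Dense (f n) := fun n => hGdense.mono (Set.iInter_subset f n)
  have hDd : Dense (⋂ n, (Subtype.val : S → Y) ⁻¹' f n) := by
    haveI := hbaire
    exact dense_iInter_of_isOpen_nat
      (fun n => (hfo n).preimage continuous_subtype_val)
      (fun n => dense_preimage_val hSdense (hfo n) (hfd n))
  have himg : Dense (Subtype.val '' (⋂ n, (Subtype.val : S → Y) ⁻¹' f n)) :=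
    hSdense.denseRange_val.dense_image continuous_subtype_val hDd
  have : Subtype.val '' (⋂ n, (Subtype.val : S → Y) ⁻¹' f n) = (⋂ n, f n) ∩ S := by
    rw [← Set.preimage_iInter, Subtype.image_preimage_coe, Set.inter_comm]
  rwa [this] at himg
end

section
/- Let X be a Baire space, Y and Z compact spaces, and f : X × (Y × Z) → ℝ continuous in the second variable (jointly in (y,z)). Suppose that for every y ∈ Y the function f_y : X × Z → ℝ, f_y(x,z) = f(x,y,z), has the Namioka property. Then for every ε > 0 and every nonempty open U ⊆ X there exist continuous functions b₁, …, b_n ∈ C(Z) and a nonempty open U₀ ⊆ U such that for every y ∈ Y there is a dense subset A ⊆ U₀ such that for each x ∈ A there exists k ∈ {1, …, n} with |f(x,y,z) − b_k(z)| ≤ ε for all z ∈ Z. -/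
open Topology

open Set

/-- Joint continuity at every point of a compact fiber gives a neighborhood of uniform
closeness. -/
lemma exists_nhd_dist_le {X Z : Type*} [TopologicalSpace X] [TopologicalSpace Z] [CompactSpace Z]
    (g : X × Z → ℝ) (x₀ : X) (hx : ∀ z, ContinuousAt g (x₀, z)) {δ : ℝ} (hδ : 0 < δ) :
    ∃ V : Set X, IsOpen V ∧ x₀ ∈ V ∧ ∀ x ∈ V, ∀ z, dist (g (x, z)) (g (x₀, z)) ≤ δ := by
  have key : ∀ z : Z, ∃ (u : Set X) (v : Set Z), IsOpen u ∧ x₀ ∈ u ∧ IsOpen v ∧ z ∈ v ∧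
      ∀ p ∈ u ×ˢ v, dist (g p) (g (x₀, z)) < δ / 2 := by
    intro z
    have h1 : g ⁻¹' Metric.ball (g (x₀, z)) (δ / 2) ∈ 𝓝 (x₀, z) :=
      hx z (Metric.ball_mem_nhds _ (by linarith))
    rw [mem_nhds_prod_iff'] at h1
    obtain ⟨u, v, hu, hxu, hv, hzv, huv⟩ := h1
    exact ⟨u, v, hu, hxu, hv, hzv, fun p hp => Metric.mem_ball.mp (huv hp)⟩
  choose u v hu hxu hv hzv hctl using key
  obtain ⟨s, hs⟩ := isCompact_univ.elim_finite_subcover v hv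
    (fun z _ => mem_iUnion.2 ⟨z, hzv z⟩)
  refine ⟨⋂ z ∈ s, u z, isOpen_biInter_finset (fun z _ => hu z),
    mem_iInter₂.2 fun z _ => hxu z, ?_⟩
  intro x hxV z
  obtain ⟨i, his, hzi⟩ : ∃ i ∈ s, z ∈ v i := by simpa using hs (mem_univ z)
  have hxz : dist (g (x, z)) (g (x₀, i)) < δ / 2 :=
    hctl i (x, z) ⟨mem_iInter₂.mp hxV i his, hzi⟩
  have hx0z : dist (g (x₀, z)) (g (x₀, i)) < δ / 2 := hctl i (x₀, z) ⟨hxu i, hzi⟩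
  calc dist (g (x, z)) (g (x₀, z))
      ≤ dist (g (x, z)) (g (x₀, i)) + dist (g (x₀, i)) (g (x₀, z)) := dist_triangle _ _ _
    _ ≤ δ := by rw [dist_comm (g (x₀, i))]; linarith


/-- A maximal pairwise disjoint family of "regions" indexed by a rich class is dense. -/
lemma exists_dense_disjoint_family {ι X : Type*} [TopologicalSpace X]
    (R : Set X) (C : Set ι) (reg : ι → Set X)
    (hne : ∀ i ∈ C, (reg i).Nonempty)
    (hrich : ∀ B : Set X, IsOpen B → B.Nonempty → B ⊆ R → ∃ i ∈ C, reg i ⊆ B) :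
    ∃ M ⊆ C, M.PairwiseDisjoint reg ∧ ∀ B : Set X, IsOpen B → B.Nonempty → B ⊆ R →
      (B ∩ ⋃ i ∈ M, reg i).Nonempty := by
  have hchain : ∀ c ⊆ {M | M ⊆ C ∧ M.PairwiseDisjoint reg}, IsChain (· ⊆ ·) c →
      ∃ ub ∈ {M | M ⊆ C ∧ M.PairwiseDisjoint reg}, ∀ s ∈ c, s ⊆ ub := by
    intro c hc hchain
    refine ⟨⋃₀ c, ⟨sUnion_subset fun s hs => (hc hs).1, ?_⟩, fun s hs => subset_sUnion_of_mem hs⟩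
    intro i hi j hj hij
    obtain ⟨s, hs, his⟩ := hi
    obtain ⟨t, ht, hjt⟩ := hj
    rcases eq_or_ne s t with rfl | hst
    · exact (hc hs).2 his hjt hij
    · rcases hchain hs ht hst with h | h
      · exact (hc ht).2 (h his) hjt hij
      · exact (hc hs).2 his (h hjt) hij
  obtain ⟨M, hM⟩ := zorn_subset {M | M ⊆ C ∧ M.PairwiseDisjoint reg} hchain
  · refine ⟨M, hM.prop.1, hM.prop.2, ?_⟩
    intro B hBo hBne hBR
    by_contra hemp
    rw [Set.not_nonempty_iff_eq_empty] at hemp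
    obtain ⟨i, hiC, hiB⟩ := hrich B hBo hBne hBR
    have hidis : ∀ j ∈ M, Disjoint (reg i) (reg j) := by
      intro j hj
      refine Set.disjoint_left.mpr fun a hai haj => ?_
      have : a ∈ B ∩ ⋃ i ∈ M, reg i := ⟨hiB hai, mem_biUnion hj haj⟩
      simp [hemp] at this
    have hins : insert i M ∈ {M | M ⊆ C ∧ M.PairwiseDisjoint reg} :=
      ⟨insert_subset hiC hM.prop.1,
        hM.prop.2.insert fun j hj _ => hidis j hj⟩
    have : insert i M ⊆ M := hM.2 hins (subset_insert i M)
    have hiM : i ∈ M := this (mem_insert i M)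
    obtain ⟨a, ha⟩ := hne i hiC
    have : a ∈ B ∩ ⋃ i ∈ M, reg i := ⟨hiB ha, mem_biUnion hiM ha⟩
    simp [hemp] at this

section BM

variable {X : Type*} [TopologicalSpace X]

/-- Legal histories (most recent move first) in a Banach–Mazur-type game on `X`,
where `α` plays open sets inside the previous response of the strategy `σ`. -/
inductive BMLegal (U : Set X) (σ : List (Set X) → Set X) : List (Set X) → Prop
  | base (A : Set X) : IsOpen A → A.Nonempty → A ⊆ U → BMLegal U σ [A]
  | cons (A : Set X) (t : List (Set X)) : BMLegal U σ t → IsOpen A → A.Nonempty →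
      A ⊆ σ t → BMLegal U σ (A :: t)

/-- In a Baire space, for any strategy `σ` of the shrinking player there is a play all of
whose responses contain a common point. -/
theorem bm_exists_play [BaireSpace X] (U : Set X) (hUo : IsOpen U) (hUne : U.Nonempty)
    (σ : List (Set X) → Set X)
    (hσ : ∀ (A : Set X) (t : List (Set X)), IsOpen A → A.Nonempty → A ⊆ U →
      IsOpen (σ (A :: t)) ∧ (σ (A :: t)).Nonempty ∧ σ (A :: t) ⊆ A) :
    ∃ (hs : ℕ → List (Set X)) (x : X), (∀ n, BMLegal U σ (hs n)) ∧
      (∀ n, ∃ A, hs (n + 1) = A :: hs n) ∧ (∀ n, x ∈ σ (hs n)) := by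
  classical
  -- basic facts about legal histories
  have legal_head : ∀ h, BMLegal U σ h →
      (∃ A t, h = A :: t ∧ IsOpen A ∧ A.Nonempty ∧ A ⊆ U) ∧ σ h ⊆ U := by
    intro h hleg
    induction hleg with
    | base A hAo hAne hAU =>
      exact ⟨⟨A, [], rfl, hAo, hAne, hAU⟩, ((hσ A [] hAo hAne hAU).2.2).trans hAU⟩
    | cons A t hleg hAo hAne hAsub ih =>
      have hAU : A ⊆ U := hAsub.trans ih.2
      exact ⟨⟨A, t, rfl, hAo, hAne, hAU⟩, ((hσ A t hAo hAne hAU).2.2).trans hAU⟩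
  have legal_resp : ∀ h, BMLegal U σ h → IsOpen (σ h) ∧ (σ h).Nonempty ∧
      ∀ A t, h = A :: t → σ h ⊆ A := by
    intro h hleg
    obtain ⟨⟨A, t, rfl, hAo, hAne, hAU⟩, -⟩ := legal_head h hleg
    obtain ⟨h1, h2, h3⟩ := hσ A t hAo hAne hAU
    exact ⟨h1, h2, fun A' t' he => by rw [(List.cons.injEq ..).mp he |>.1] at h3 ⊢; exact h3⟩
  have legal_cons_sub : ∀ A t, BMLegal U σ (A :: t) → t ≠ [] → A ⊆ σ t := by
    intro A t hleg ht
    cases hleg with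
    | base _ _ _ _ => exact absurd rfl ht
    | cons _ _ _ _ _ hsub => exact hsub
  -- the region associated to a (possibly empty) history
  set Rg : List (Set X) → Set X := fun h => List.rec U (fun A t _ => σ (A :: t)) h with hRg
  have hRg_nil : Rg [] = U := rfl
  have hRg_cons : ∀ A t, Rg (A :: t) = σ (A :: t) := fun _ _ => rfl
  -- the key extension step producing dense disjoint families of children
  have key : ∀ h : List (Set X), (h = [] ∨ BMLegal U σ h) →
      ∃ M : Set (List (Set X)), (∀ g ∈ M, BMLegal U σ g ∧ ∃ A, g = A :: h) ∧
        M.PairwiseDisjoint σ ∧ ∀ B : Set X, IsOpen B → B.Nonempty → B ⊆ Rg h →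
          (B ∩ ⋃ g ∈ M, σ g).Nonempty := by
    intro h hh
    have hRU : Rg h ⊆ U := by
      rcases hh with rfl | hleg
      · exact subset_rfl
      · obtain ⟨⟨A, t, rfl, -⟩, h2⟩ := legal_head h hleg
        exact h2
    obtain ⟨M, hMC, hMdis, hMdense⟩ := exists_dense_disjoint_family (Rg h)
      {g | BMLegal U σ g ∧ ∃ A, g = A :: h} σ
      (fun g hg => (legal_resp g hg.1).2.1)
      (by
        intro B hBo hBne hBR
        have hBU : B ⊆ U := hBR.trans hRU
        have hleg : BMLegal U σ (B :: h) := by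
          rcases hh with rfl | hleg
          · exact BMLegal.base B hBo hBne hBU
          · obtain ⟨⟨A, t, rfl, -⟩, -⟩ := legal_head h hleg
            exact BMLegal.cons B _ hleg hBo hBne (by rwa [← hRg_cons A t])
        exact ⟨B :: h, ⟨hleg, B, rfl⟩, (hσ B h hBo hBne hBU).2.2⟩)
    exact ⟨M, fun g hg => hMC hg, hMdis, hMdense⟩
  -- choose extension families
  have keychoice : ∀ h : List (Set X), ∃ M : Set (List (Set X)),
      (h = [] ∨ BMLegal U σ h) →
      (∀ g ∈ M, BMLegal U σ g ∧ ∃ A, g = A :: h) ∧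
        M.PairwiseDisjoint σ ∧ ∀ B : Set X, IsOpen B → B.Nonempty → B ⊆ Rg h →
          (B ∩ ⋃ g ∈ M, σ g).Nonempty := by
    intro h
    by_cases hh : h = [] ∨ BMLegal U σ h
    · obtain ⟨M, hM⟩ := key h hh
      exact ⟨M, fun _ => hM⟩
    · exact ⟨∅, fun h' => absurd h' hh⟩
  choose ext hext using keychoice
  -- the levels of the tree
  set levels : ℕ → Set (List (Set X)) :=
    fun n => Nat.rec (ext []) (fun _ S => ⋃ g ∈ S, ext g) n with hlevels
  have hlevels_zero : levels 0 = ext [] := rfl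
  have hlevels_succ : ∀ n, levels (n + 1) = ⋃ g ∈ levels n, ext g := fun _ => rfl
  -- invariants
  have hleg_lvl : ∀ n, ∀ h ∈ levels n, BMLegal U σ h := by
    intro n
    induction n with
    | zero => exact fun h hh => ((hext [] (Or.inl rfl)).1 h hh).1
    | succ n ih =>
      intro h hh
      rw [hlevels_succ] at hh
      obtain ⟨g, hg, hhg⟩ := mem_iUnion₂.mp hh
      exact ((hext g (Or.inr (ih g hg))).1 h hhg).1
  have hdis_lvl : ∀ n, (levels n).PairwiseDisjoint σ := by
    intro n
    induction n with
    | zero => exact (hext [] (Or.inl rfl)).2.1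
    | succ n ih =>
      intro g₁ hg₁ g₂ hg₂ hne12
      rw [hlevels_succ] at hg₁ hg₂
      obtain ⟨p₁, hp₁, hgp₁⟩ := mem_iUnion₂.mp hg₁
      obtain ⟨p₂, hp₂, hgp₂⟩ := mem_iUnion₂.mp hg₂
      have hsp : ∀ p (hp : p ∈ levels n) g, g ∈ ext p → σ g ⊆ σ p := by
        intro p hp g hgp
        obtain ⟨hgleg, A, rfl⟩ := (hext p (Or.inr (hleg_lvl n p hp))).1 g hgp
        have hpne : p ≠ [] := by
          obtain ⟨⟨A', t', he, -⟩, -⟩ := legal_head p (hleg_lvl n p hp)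
          simp [he]
        exact ((legal_resp _ hgleg).2.2 A p rfl).trans (legal_cons_sub A p hgleg hpne)
      rcases eq_or_ne p₁ p₂ with rfl | hpp
      · exact (hext p₁ (Or.inr (hleg_lvl n p₁ hp₁))).2.1 hgp₁ hgp₂ hne12
      · exact Disjoint.mono (hsp p₁ hp₁ g₁ hgp₁) (hsp p₂ hp₂ g₂ hgp₂) (ih hp₁ hp₂ hpp)
  have hdense_lvl : ∀ n, U ⊆ closure (⋃ h ∈ levels n, σ h) := by
    intro n
    induction n with
    | zero =>
      intro x hx
      rw [mem_closure_iff]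
      intro o ho hxo
      have := (hext [] (Or.inl rfl)).2.2 (o ∩ U) (ho.inter hUo) ⟨x, hxo, hx⟩
        inter_subset_right
      obtain ⟨a, ⟨hao, -⟩, ha2⟩ := this
      exact ⟨a, hao, ha2⟩
    | succ n ih =>
      have step : (⋃ h ∈ levels n, σ h) ⊆ closure (⋃ h ∈ levels (n + 1), σ h) := by
        intro x hx
        obtain ⟨h, hh, hxh⟩ := mem_iUnion₂.mp hx
        have hhleg := hleg_lvl n h hh
        rw [mem_closure_iff]
        intro o ho hxo
        have hσh := legal_resp h hhleg
        have hsub : σ h ⊆ Rg h := by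
          obtain ⟨⟨A, t, rfl, -⟩, -⟩ := legal_head h hhleg
          rw [hRg_cons]
        have := (hext h (Or.inr hhleg)).2.2 (o ∩ σ h) (ho.inter hσh.1) ⟨x, hxo, hxh⟩
          (inter_subset_right.trans hsub)
        obtain ⟨a, ⟨hao, -⟩, ha2⟩ := this
        obtain ⟨g, hg, hag⟩ := mem_iUnion₂.mp ha2
        refine ⟨a, hao, mem_iUnion₂.mpr ⟨g, ?_, hag⟩⟩
        rw [hlevels_succ]
        exact mem_iUnion₂.mpr ⟨h, hh, hg⟩
      calc U ⊆ closure (⋃ h ∈ levels n, σ h) := ih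
        _ ⊆ closure (closure (⋃ h ∈ levels (n + 1), σ h)) := closure_mono step
        _ = closure (⋃ h ∈ levels (n + 1), σ h) := closure_closure
  -- Baire
  set D : ℕ → Set X := fun n => (⋃ h ∈ levels n, σ h) ∪ (closure U)ᶜ with hD
  have hDo : ∀ n, IsOpen (D n) := by
    intro n
    exact IsOpen.union (isOpen_biUnion fun h hh => (legal_resp h (hleg_lvl n h hh)).1)
      isClosed_closure.isOpen_compl
  have hDd : ∀ n, Dense (D n) := by
    intro n
    intro x
    rcases em (x ∈ closure U) with hx | hx
    · have h1 : closure U ⊆ closure (⋃ h ∈ levels n, σ h) :=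
        closure_minimal (hdense_lvl n) isClosed_closure
      exact closure_mono subset_union_left (h1 hx)
    · exact subset_closure (Or.inr hx)
  have hDdense : Dense (⋂ n, D n) := dense_iInter_of_isOpen hDo hDd
  obtain ⟨x, hxU, hxD⟩ := hDdense.inter_open_nonempty U hUo hUne
  have hxG : ∀ n, x ∈ ⋃ h ∈ levels n, σ h := by
    intro n
    have hxDn : x ∈ D n := mem_iInter.mp hxD n
    rcases hxDn with h | h
    · exact h
    · exact absurd (subset_closure hxU) h
  -- extraction of the chain of histories
  have hex : ∀ n, ∃ h, h ∈ levels n ∧ x ∈ σ h := by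
    intro n
    obtain ⟨h, hh, hxh⟩ := mem_iUnion₂.mp (hxG n)
    exact ⟨h, hh, hxh⟩
  choose hf hfmem hfx using hex
  have huniq : ∀ n h h', h ∈ levels n → h' ∈ levels n → x ∈ σ h → x ∈ σ h' → h = h' := by
    intro n h h' hh hh' hxh hxh'
    by_contra hne
    exact Set.disjoint_left.mp (hdis_lvl n hh hh' hne) hxh hxh'
  refine ⟨hf, x, fun n => hleg_lvl n _ (hfmem n), ?_, hfx⟩
  intro n
  have hmem : hf (n + 1) ∈ ⋃ g ∈ levels n, ext g := by
    rw [← hlevels_succ]; exact hfmem (n + 1)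
  obtain ⟨p, hp, hfp⟩ := mem_iUnion₂.mp hmem
  obtain ⟨hgleg, A, hA⟩ := (hext p (Or.inr (hleg_lvl n p hp))).1 _ hfp
  have hpne : p ≠ [] := by
    obtain ⟨⟨A', t', he, -⟩, -⟩ := legal_head p (hleg_lvl n p hp)
    simp [he]
  have hxp : x ∈ σ p := by
    have h1 : σ (hf (n + 1)) ⊆ A := (legal_resp _ hgleg).2.2 A p hA
    have h2 : A ⊆ σ p := legal_cons_sub A p (hA ▸ hgleg) hpne
    exact h2 (h1 (hfx (n + 1)))
  have : p = hf n := huniq n p (hf n) hp (hfmem n) hxp (hfx n)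
  exact ⟨A, by rw [hA, this]⟩

end BM


/-- Proposition 4.3. -/
theorem exists_finite_net_of_namioka_sections {X Y Z : Type*} [TopologicalSpace X]
    [BaireSpace X] [TopologicalSpace Y] [CompactSpace Y] [TopologicalSpace Z]
    [CompactSpace Z]
    (f : X × (Y × Z) → ℝ)
    (hf2 : ∀ x : X, Continuous fun p : Y × Z => f (x, p))
    (hfy : ∀ y : Y, NamiokaProperty fun q : X × Z => f (q.1, (y, q.2)))
    (ε : ℝ) (hε : 0 < ε) (U : Set X) (hU : IsOpen U) (hUne : U.Nonempty) :
    ∃ (n : ℕ) (b : Fin n → C(Z, ℝ)) (U₀ : Set X), IsOpen U₀ ∧ U₀.Nonempty ∧ U₀ ⊆ U ∧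
      ∀ y : Y, ∃ A : Set X, A ⊆ U₀ ∧ U₀ ⊆ closure A ∧
        ∀ x ∈ A, ∃ k : Fin n, ∀ z : Z, |f (x, (y, z)) - b k z| ≤ ε := by
  classical
  rcases isEmpty_or_nonempty Y with hY | hY
  · exact ⟨0, Fin.elim0, U, hU, hUne, subset_rfl, fun y => (IsEmpty.false y).elim⟩
  haveI : Nonempty X := ⟨hUne.choose⟩
  haveI : Inhabited Y := Classical.inhabited_of_nonempty hY
  -- the associated map into C(Y, C(Z, ℝ))
  set G : X → C(Y, C(Z, ℝ)) :=
    fun x => ContinuousMap.curry ⟨fun p => f (x, p), hf2 x⟩ with hGdef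
  have hGapp : ∀ x y z, G x y z = f (x, (y, z)) := fun _ _ _ => rfl
  -- Namioka data for each y
  choose Aset hAdense hAGδ hAcont using hfy
  -- continuity of x ↦ G x y at points of Aset y
  have hsec : ∀ (y : Y) (x : X), x ∈ Aset y → ∀ δ : ℝ, 0 < δ → ∃ V : Set X, IsOpen V ∧ x ∈ V ∧
      ∀ x' ∈ V, dist (G x' y) (G x y) ≤ δ := by
    intro y x hx δ hδ
    obtain ⟨V, hVo, hxV, hV⟩ := exists_nhd_dist_le (fun q : X × Z => f (q.1, (y, q.2))) x
      (fun z => hAcont y x hx z) hδ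
    refine ⟨V, hVo, hxV, fun x' hx' => ?_⟩
    rw [ContinuousMap.dist_le hδ.le]
    intro z
    exact hV x' hx' z
  -- the key dichotomy
  have H : ∃ V : Set X, IsOpen V ∧ V.Nonempty ∧ V ⊆ U ∧ ∃ x' ∈ V, ∀ (y : Y) (W : Set X),
      IsOpen W → W.Nonempty → W ⊆ V → ∃ x ∈ W, ∃ y', dist (G x y) (G x' y') ≤ ε / 2 := by
    by_contra hN
    push_neg at hN
    -- hN : ∀ V, IsOpen V → V.Nonempty → V ⊆ U → ∀ x' ∈ V, ∃ y W, IsOpen W ∧ W.Nonempty ∧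
    --   W ⊆ V ∧ ∀ x ∈ W, ∀ y', ε/2 < dist (G x y) (G x' y')
    have hstep : ∀ (A : Set X) (Ys : List Y), ∃ d : X × Y × Set X,
        (IsOpen A ∧ A.Nonempty ∧ A ⊆ U) →
        IsOpen d.2.2 ∧ d.2.2.Nonempty ∧ d.2.2 ⊆ A ∧
          (∀ y' ∈ Ys, ∀ x' ∈ d.2.2, dist (G x' y') (G d.1 y') ≤ ε / 8) ∧
          (∀ x' ∈ d.2.2, ∀ y'', ε / 2 < dist (G x' d.2.1) (G d.1 y'')) := by
      intro A Ys
      by_cases hA : IsOpen A ∧ A.Nonempty ∧ A ⊆ U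
      · obtain ⟨hAo, hAne, hAU⟩ := hA
        -- a point of A in the dense Gδ sets of all previous y's
        have hdense : Dense (⋂ y' ∈ {y | y ∈ Ys}, Aset y') :=
          dense_biInter_of_Gδ (fun y _ => hAGδ y) Ys.finite_toSet.countable
            (fun y _ => hAdense y)
        obtain ⟨x, hxA, hxI⟩ := hdense.inter_open_nonempty A hAo hAne
        have hxmem : ∀ y' ∈ Ys, x ∈ Aset y' := by
          intro y' hy'
          exact mem_iInter₂.mp hxI y' hy'
        -- continuity control neighborhoods
        have hV : ∀ y' : Y, ∃ Vy : Set X, IsOpen Vy ∧ x ∈ Vy ∧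
            (y' ∈ Ys → ∀ x' ∈ Vy, dist (G x' y') (G x y') ≤ ε / 8) := by
          intro y'
          by_cases hy' : y' ∈ Ys
          · obtain ⟨Vy, h1, h2, h3⟩ := hsec y' x (hxmem y' hy') (ε / 8) (by linarith)
            exact ⟨Vy, h1, h2, fun _ => h3⟩
          · exact ⟨univ, isOpen_univ, mem_univ x, fun h => absurd h hy'⟩
        choose Vf hVfo hVfx hVfc using hV
        have hVopen : IsOpen (A ∩ ⋂ y' ∈ Ys.toFinset, Vf y') :=
          hAo.inter (isOpen_biInter_finset fun y' _ => hVfo y')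
        have hxV : x ∈ A ∩ ⋂ y' ∈ Ys.toFinset, Vf y' :=
          ⟨hxA, mem_iInter₂.2 fun y' _ => hVfx y'⟩
        obtain ⟨ynew, W, hWo, hWne, hWV, hfar⟩ := hN (A ∩ ⋂ y' ∈ Ys.toFinset, Vf y') hVopen
          ⟨x, hxV⟩ (inter_subset_left.trans hAU) x hxV
        refine ⟨(x, ynew, W), fun _ => ⟨hWo, hWne, hWV.trans inter_subset_left, ?_, hfar⟩⟩
        intro y' hy' x' hx'
        exact hVfc y' hy' x'
          (mem_iInter₂.mp (hWV hx').2 y' (List.mem_toFinset.mpr hy'))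
      · exact ⟨(Classical.arbitrary X, Classical.arbitrary Y, ∅), fun h => absurd h hA⟩
    choose stepD hstepD using hstep
    -- the strategy
    set yL : List (Set X) → List Y :=
      fun h => List.rec ([] : List Y) (fun A t ih => (stepD A ih).2.1 :: ih) h with hyL
    set σf : List (Set X) → Set X :=
      fun h => List.rec U (fun A t _ => (stepD A (yL t)).2.2) h with hσf
    have hyL_cons : ∀ A t, yL (A :: t) = (stepD A (yL t)).2.1 :: yL t := fun _ _ => rfl
    have hσf_cons : ∀ A t, σf (A :: t) = (stepD A (yL t)).2.2 := fun _ _ => rfl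
    have hσ : ∀ (A : Set X) (t : List (Set X)), IsOpen A → A.Nonempty → A ⊆ U →
        IsOpen (σf (A :: t)) ∧ (σf (A :: t)).Nonempty ∧ σf (A :: t) ⊆ A := by
      intro A t hAo hAne hAU
      obtain ⟨h1, h2, h3, -⟩ := hstepD A (yL t) ⟨hAo, hAne, hAU⟩
      exact ⟨h1, h2, h3⟩
    obtain ⟨hs, xstar, hleg, hshape, hxin⟩ := bm_exists_play U hU hUne σf hσ
    -- heads of legal histories are open, nonempty, contained in U
    have legal_head : ∀ h, BMLegal U σf h →
        (∃ A t, h = A :: t ∧ IsOpen A ∧ A.Nonempty ∧ A ⊆ U) := by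
      intro h hlegh
      have : (∃ A t, h = A :: t ∧ IsOpen A ∧ A.Nonempty ∧ A ⊆ U) ∧ σf h ⊆ U := by
        induction hlegh with
        | base A hAo hAne hAU =>
          exact ⟨⟨A, [], rfl, hAo, hAne, hAU⟩, ((hσ A [] hAo hAne hAU).2.2).trans hAU⟩
        | cons A t hlegt hAo hAne hAsub ih =>
          have hAU : A ⊆ U := hAsub.trans ih.2
          exact ⟨⟨A, t, rfl, hAo, hAne, hAU⟩, ((hσ A t hAo hAne hAU).2.2).trans hAU⟩
      exact this.1
    have hshape' : ∀ n, ∃ A t, hs n = A :: t ∧ IsOpen A ∧ A.Nonempty ∧ A ⊆ U :=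
      fun n => legal_head (hs n) (hleg n)
    -- stage data
    set yseq : ℕ → Y := fun n => (yL (hs n)).headI with hyseq
    -- stage properties
    have hstage : ∀ n, ∀ A t, hs n = A :: t →
        (∀ y' ∈ yL t, ∀ x' ∈ σf (hs n), dist (G x' y') (G (stepD A (yL t)).1 y') ≤ ε / 8) ∧
        (∀ x' ∈ σf (hs n), ∀ y'', ε / 2 < dist (G x' (yseq n)) (G (stepD A (yL t)).1 y'')) := by
      intro n A t heq
      obtain ⟨A', t', heq', hAo, hAne, hAU⟩ := hshape' n
      rw [heq] at heq'
      obtain ⟨rfl, rfl⟩ : A = A' ∧ t = t' := by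
        exact ⟨(List.cons.injEq ..).mp heq' |>.1, (List.cons.injEq ..).mp heq' |>.2⟩
      obtain ⟨-, -, -, hctl, hfar⟩ := hstepD A (yL t) ⟨hAo, hAne, hAU⟩
      have hys : yseq n = (stepD A (yL t)).2.1 := by
        show (yL (hs n)).headI = _
        rw [heq, hyL_cons]
        rfl
      constructor
      · intro y' hy' x' hx'
        rw [heq, hσf_cons] at hx'
        exact hctl y' hy' x' hx'
      · intro x' hx' y''
        rw [heq, hσf_cons] at hx'
        rw [hys]
        exact hfar x' hx' y''
    -- membership of previous y's
    have hself : ∀ n, yseq n ∈ yL (hs n) := by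
      intro n
      obtain ⟨A, t, heq, -⟩ := hshape' n
      show (yL (hs n)).headI ∈ yL (hs n)
      rw [heq, hyL_cons]
      exact List.mem_cons_self
    have hmemy : ∀ k m, m ≤ k → yseq m ∈ yL (hs k) := by
      intro k
      induction k with
      | zero =>
        intro m hm
        interval_cases m
        exact hself 0
      | succ k ih =>
        intro m hm
        rcases Nat.lt_or_ge m (k + 1) with hlt | hge
        · obtain ⟨A, heq⟩ := hshape k
          rw [heq, hyL_cons]
          exact List.mem_cons_of_mem _ (ih m (Nat.lt_succ_iff.mp hlt))
        · have : m = k + 1 := le_antisymm hm hge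
          subst this
          exact hself (k + 1)
    -- P1 and P2
    have hP1 : ∀ n y'', ∃ xn : X, ε / 2 < dist (G xstar (yseq n)) (G xn y'') ∧
        ∀ m, m < n → dist (G xstar (yseq m)) (G xn (yseq m)) ≤ ε / 8 := by
      intro n y''
      obtain ⟨A, t, heq, -⟩ := hshape' n
      obtain ⟨hctl, hfar⟩ := hstage n A t heq
      refine ⟨(stepD A (yL t)).1, hfar xstar (hxin n) y'', ?_⟩
      intro m hm
      -- t = hs (n-1) when n ≥ 1; m < n
      rcases n with - | n'
      · omega
      · obtain ⟨A2, heq2⟩ := hshape n'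
        have ht : t = hs n' := by
          injection (heq.symm.trans heq2) with h1 h2
        exact hctl (yseq m) (ht ▸ hmemy n' m (Nat.lt_succ_iff.mp hm)) xstar (hxin (n' + 1))
    -- cluster point of the sequence (yseq n) in the compact space Y
    obtain ⟨ystar, hcl⟩ := exists_clusterPt_of_compactSpace (Filter.map yseq Filter.atTop)
    have hclm : MapClusterPt ystar Filter.atTop yseq := hcl
    have hOopen : IsOpen ((fun y => G xstar y) ⁻¹' Metric.ball (G xstar ystar) (ε / 8)) :=
      (G xstar).continuous.isOpen_preimage _ Metric.isOpen_ball
    have hOy : ystar ∈ (fun y => G xstar y) ⁻¹' Metric.ball (G xstar ystar) (ε / 8) := by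
      simp only [mem_preimage, Metric.mem_ball, dist_self]
      linarith
    have hfreq : ∃ᶠ n in Filter.atTop, yseq n ∈
        (fun y => G xstar y) ⁻¹' Metric.ball (G xstar ystar) (ε / 8) :=
      mapClusterPt_iff_frequently.mp hclm _ (hOopen.mem_nhds hOy)
    obtain ⟨m, hmO⟩ := hfreq.exists
    obtain ⟨n, hnO, hmn⟩ := (hfreq.and_eventually (Filter.eventually_gt_atTop m)).exists
    obtain ⟨xn, h1, h2⟩ := hP1 n (yseq m)
    have h2' : dist (G xstar (yseq m)) (G xn (yseq m)) ≤ ε / 8 := h2 m hmn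
    have h3 : dist (G xstar (yseq n)) (G xstar ystar) < ε / 8 := Metric.mem_ball.mp hnO
    have h4 : dist (G xstar (yseq m)) (G xstar ystar) < ε / 8 := Metric.mem_ball.mp hmO
    have htri : dist (G xstar (yseq n)) (G xn (yseq m)) ≤
        dist (G xstar (yseq n)) (G xstar ystar) + dist (G xstar ystar) (G xstar (yseq m)) +
          dist (G xstar (yseq m)) (G xn (yseq m)) := dist_triangle4 _ _ _ _
    rw [dist_comm (G xstar ystar) (G xstar (yseq m))] at htri
    linarith
  -- the positive case: build the finite net
  obtain ⟨V, hVo, hVne, hVU, x', hx'V, hkey⟩ := H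
  have hK : IsCompact (Set.range fun y => G x' y) := isCompact_range (G x').continuous
  obtain ⟨t, htf, htcov⟩ := Metric.totallyBounded_iff.mp hK.totallyBounded (ε / 2)
    (by linarith)
  set s := htf.toFinset with hsdef
  refine ⟨s.card, fun k => (s.equivFin.symm k : C(Z, ℝ)), V, hVo, hVne, hVU, fun y => ?_⟩
  refine ⟨{x | x ∈ V ∧ ∃ y', dist (G x y) (G x' y') ≤ ε / 2}, fun x hx => hx.1, ?_, ?_⟩
  · intro x hx
    rw [mem_closure_iff]
    intro o ho hxo
    obtain ⟨x₁, hx₁, y', hy'⟩ := hkey y (o ∩ V) (ho.inter hVo) ⟨x, hxo, hx⟩ inter_subset_right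
    exact ⟨x₁, hx₁.1, hx₁.2, y', hy'⟩
  · rintro x ⟨hxV, y', hy'⟩
    have : G x' y' ∈ ⋃ c ∈ t, Metric.ball c (ε / 2) := htcov ⟨y', rfl⟩
    obtain ⟨c, hc, hcball⟩ := mem_iUnion₂.mp this
    have hcs : c ∈ s := htf.mem_toFinset.mpr hc
    refine ⟨s.equivFin ⟨c, hcs⟩, fun z => ?_⟩
    show |f (x, (y, z)) - ((s.equivFin.symm (s.equivFin ⟨c, hcs⟩) : C(Z, ℝ))) z| ≤ ε
    rw [Equiv.symm_apply_apply]
    have hd1 : dist (G x y) c ≤ ε :=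
      (dist_triangle (G x y) (G x' y') c).trans
        (by have := Metric.mem_ball.mp hcball; linarith)
    calc |f (x, (y, z)) - c z| = dist (G x y z) (c z) := by
          rw [Real.dist_eq, hGapp]
      _ ≤ dist (G x y) c := ContinuousMap.dist_apply_le_dist z
      _ ≤ ε := hd1
end

section
/- Let X be a Baire space, Y a compact space, Z a metric space, and f : X × Y → Z quasi-continuous in the first variable and continuous in the second variable. Then for every ε > 0 and every nonempty open set U ⊆ X there exist points z₁, …, z_n ∈ Z and a nonempty open set U₀ ⊆ U such that for every x ∈ U₀ and every y ∈ Y there exists k ∈ {1, …, n} with d(f(x,y), z_k) ≤ ε. -/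
open Topology

/-- Proposition 5.1. -/
theorem exists_finite_net_metric {X Y Z : Type*} [TopologicalSpace X] [BaireSpace X]
    [TopologicalSpace Y] [CompactSpace Y] [MetricSpace Z]
    (f : X × Y → Z)
    (hf1 : ∀ y : Y, QuasiContinuous fun x : X => f (x, y))
    (hf2 : ∀ x : X, Continuous fun y : Y => f (x, y))
    (ε : ℝ) (hε : 0 < ε) (U : Set X) (hU : IsOpen U) (hUne : U.Nonempty) :
    ∃ (n : ℕ) (z : Fin n → Z) (U₀ : Set X), IsOpen U₀ ∧ U₀.Nonempty ∧ U₀ ⊆ U ∧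
      ∀ x ∈ U₀, ∀ y : Y, ∃ k : Fin n, dist (f (x, y)) (z k) ≤ ε := by
  by_contra hcon
  push_neg at hcon
  -- `H`: for every finite family of values and every nonempty open `V ⊆ U`,
  -- there is a point of `V` and a `y` whose value is `ε`-far from all of them.
  have H := hcon
  -- the sets `S n` of points whose slice has an `ε/4`-net of size `n`
  set S : ℕ → Set X := fun n => {x | ∃ w : Fin n → Z, ∀ y : Y,
    ∃ i : Fin n, dist (f (x, y)) (w i) ≤ ε / 4} with hS
  have hScov : ∀ x : X, ∃ n, x ∈ S n := by
    intro x
    have hK : IsCompact (Set.range fun y : Y => f (x, y)) :=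
      isCompact_range (hf2 x)
    obtain ⟨t, -, htfin, hsub⟩ := hK.finite_cover_balls (e := ε / 4) (by linarith)
    obtain ⟨n, g, -, hg⟩ := htfin.fin_param
    refine ⟨n, g, fun y => ?_⟩
    have : f (x, y) ∈ ⋃ z ∈ t, Metric.ball z (ε / 4) := hsub ⟨y, rfl⟩
    simp only [Set.mem_iUnion] at this
    obtain ⟨c, hct, hc⟩ := this
    rw [← hg] at hct
    obtain ⟨i, rfl⟩ := hct
    exact ⟨i, le_of_lt hc⟩
  -- Baire: some `S n` is dense in a nonempty open subset `G` of `U`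
  have hclosed : ∀ n, IsClosed (closure (S n) ∪ Uᶜ) := fun n =>
    isClosed_closure.union hU.isClosed_compl
  have hcover : (⋃ n, closure (S n) ∪ Uᶜ) = Set.univ := by
    apply Set.eq_univ_of_forall
    intro x
    obtain ⟨n, hn⟩ := hScov x
    exact Set.mem_iUnion.2 ⟨n, Or.inl (subset_closure hn)⟩
  have hdense := dense_iUnion_interior_of_closed hclosed hcover
  obtain ⟨x₀, hx₀⟩ := hUne
  obtain ⟨p, hpI, hpU⟩ := hdense.exists_mem_open hU ⟨x₀, hx₀⟩
  rw [Set.mem_iUnion] at hpI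
  obtain ⟨n, hpn⟩ := hpI
  set G : Set X := U ∩ interior (closure (S n) ∪ Uᶜ) with hG
  have hGo : IsOpen G := hU.inter isOpen_interior
  have hGne : G.Nonempty := ⟨p, hpU, hpn⟩
  have hGU : G ⊆ U := Set.inter_subset_left
  -- `S n` is dense in `G`
  have hdenseG : ∀ W : Set X, IsOpen W → W.Nonempty → W ⊆ G → (W ∩ S n).Nonempty := by
    intro W hWo hWne hWG
    obtain ⟨w, hw⟩ := hWne
    have hwcl : w ∈ closure (S n) := by
      rcases interior_subset (hWG hw).2 with h | h
      · exact h
      · exact absurd (hWG hw).1 h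
    exact (mem_closure_iff.1 hwcl) W hWo hw
  -- recursively build nested open sets with ε-separated values
  have key : ∀ m : ℕ, ∃ (V : Set X) (y : Fin m → Y) (z : Fin m → Z),
      IsOpen V ∧ V.Nonempty ∧ V ⊆ G ∧
      (∀ j : Fin m, ∀ x ∈ V, dist (f (x, y j)) (z j) ≤ ε / 8) ∧
      (∀ j k : Fin m, j ≠ k → ε < dist (z j) (z k)) := by
    intro m
    induction m with
    | zero =>
      exact ⟨G, Fin.elim0, Fin.elim0, hGo, hGne, le_refl _,
        fun j => j.elim0, fun j => j.elim0⟩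
    | succ m ih =>
      obtain ⟨V, y, z, hVo, hVne, hVG, hdist, hsep⟩ := ih
      obtain ⟨x, hxV, y₀, hy₀⟩ := H m z V hVo hVne (hVG.trans hGU)
      obtain ⟨V', hV'o, hV'ne, hV'V, hV'img⟩ :=
        hf1 y₀ x V (hVo.mem_nhds hxV) (Metric.ball (f (x, y₀)) (ε / 8))
          (Metric.ball_mem_nhds _ (by linarith))
      refine ⟨V', Fin.snoc y y₀, Fin.snoc z (f (x, y₀)), hV'o, hV'ne,
        hV'V.trans hVG, ?_, ?_⟩
      · intro j x' hx'
        refine Fin.lastCases ?_ ?_ j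
        · simp only [Fin.snoc_last]
          exact le_of_lt (hV'img ⟨x', hx', rfl⟩)
        · intro i
          simp only [Fin.snoc_castSucc]
          exact hdist i x' (hV'V hx')
      · intro j k hjk
        rcases Fin.eq_castSucc_or_eq_last j with ⟨j', rfl⟩ | rfl <;>
          rcases Fin.eq_castSucc_or_eq_last k with ⟨k', rfl⟩ | rfl
        · simp only [Fin.snoc_castSucc]
          exact hsep j' k' fun h => hjk (by rw [h])
        · simp only [Fin.snoc_castSucc, Fin.snoc_last]
          rw [dist_comm]
          exact hy₀ j'
        · simp only [Fin.snoc_castSucc, Fin.snoc_last]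
          exact hy₀ k'
        · exact absurd rfl hjk
  -- get the contradiction at stage `n+1`
  obtain ⟨V, y, z, hVo, hVne, hVG, hdist, hsep⟩ := key (n + 1)
  obtain ⟨x', hx'V, w, hw⟩ := hdenseG V hVo hVne hVG
  choose i hi using fun j : Fin (n + 1) => hw (y j)
  obtain ⟨a, b, hab, hiab⟩ := Fintype.exists_ne_map_eq_of_card_lt i
    (by simp [Fintype.card_fin])
  have h1 : dist (z a) (z b) ≤ 3 * ε / 4 := by
    have ha := hdist a x' hx'V
    have hb := hdist b x' hx'V
    have hia := hi a
    have hib := hi b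
    rw [hiab] at hia
    have t4 := dist_triangle4 (z a) (f (x', y a)) (f (x', y b)) (z b)
    have tm := dist_triangle (f (x', y a)) (w (i b)) (f (x', y b))
    have e1 : dist (z a) (f (x', y a)) = dist (f (x', y a)) (z a) := dist_comm _ _
    have e2 : dist (w (i b)) (f (x', y b)) = dist (f (x', y b)) (w (i b)) := dist_comm _ _
    linarith
  have h2 := hsep a b hab
  linarith
end
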